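/- arXiv:0708.2113 — 7 statements merged into one kernel-verified Lean document; each statement's English description precedes it below -/
import Mathlib

section
/- A bipartite state ρ₀ on C^d ⊗ C^d is faithful (i.e., Λ ↦ (I ⊗ Λ)(ρ₀) is injective on linear maps over d×d matrices) if and only if the operator ρ̌₀ = (E ρ₀)^{T_B} E is invertible, where E is the swap operator. -/
open Matrix Finset
open scoped ComplexOrder

noncomputable section

/-- Kronecker (tensor) product of two `d × d` complex matrices. -/
def kron {d : ℕ} (A B : Matrix (Fin d) (Fin d) ℂ) :
    Matrix (Fin d × Fin d) (Fin d × Fin d) ℂ :=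
  Matrix.kroneckerMap (· * ·) A B

/-- The action of `I ⊗ Λ` on a bipartite operator. -/
def applyRight {d : ℕ} (Λ : Matrix (Fin d) (Fin d) ℂ →ₗ[ℂ] Matrix (Fin d) (Fin d) ℂ)
    (ρ : Matrix (Fin d × Fin d) (Fin d × Fin d) ℂ) :
    Matrix (Fin d × Fin d) (Fin d × Fin d) ℂ :=
  fun p q => ∑ r : Fin d, ∑ s : Fin d,
    ρ (p.1, r) (q.1, s) * Λ (Matrix.single r s 1) p.2 q.2

/-- The outer product `|x⟩⟨x|`. -/
def outer {ι : Type*} (x : ι → ℂ) : Matrix ι ι ℂ :=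
  Matrix.vecMulVec x (star x)

/-- The swap operator `E = ∑ |ij⟩⟨ji|`. -/
def swapOp {d : ℕ} : Matrix (Fin d × Fin d) (Fin d × Fin d) ℂ :=
  fun p q => if p.1 = q.2 ∧ p.2 = q.1 then 1 else 0

/-- Partial transpose with respect to the second tensor factor. -/
def ptransB {d : ℕ} (ρ : Matrix (Fin d × Fin d) (Fin d × Fin d) ℂ) :
    Matrix (Fin d × Fin d) (Fin d × Fin d) ℂ :=
  fun p q => ρ (p.1, q.2) (q.1, p.2)

/-- `ρ̌ = (E ρ)^{T_B} E`. -/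
def check {d : ℕ} (ρ : Matrix (Fin d × Fin d) (Fin d × Fin d) ℂ) :
    Matrix (Fin d × Fin d) (Fin d × Fin d) ℂ :=
  ptransB (swapOp * ρ) * swapOp

/-- A bipartite state is faithful if `Λ ↦ (I ⊗ Λ)(ρ)` is injective. -/
def Faithful {d : ℕ} (ρ : Matrix (Fin d × Fin d) (Fin d × Fin d) ℂ) : Prop :=
  Function.Injective (fun Λ : Matrix (Fin d) (Fin d) ℂ →ₗ[ℂ] Matrix (Fin d) (Fin d) ℂ =>
    applyRight Λ ρ)

/-- A positive map: sends PSD matrices to PSD matrices. -/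
def PosMap {d : ℕ} (Λ : Matrix (Fin d) (Fin d) ℂ →ₗ[ℂ] Matrix (Fin d) (Fin d) ℂ) : Prop :=
  ∀ X : Matrix (Fin d) (Fin d) ℂ, X.PosSemidef → (Λ X).PosSemidef

/-- The cone `K⁺(ρ₀)` of operators `(I ⊗ Λ)(ρ₀)` with `Λ` a positive map. -/
def Kplus {d : ℕ} (ρ₀ : Matrix (Fin d × Fin d) (Fin d × Fin d) ℂ) :
    Set (Matrix (Fin d × Fin d) (Fin d × Fin d) ℂ) :=
  {σ | ∃ Λ, PosMap Λ ∧ σ = applyRight Λ ρ₀}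

/-- The maximally entangled vector `|ψ⁺⟩ = (1/√d) ∑ᵢ |ii⟩`. -/
def psiPlus {d : ℕ} : Fin d × Fin d → ℂ :=
  fun p => if p.1 = p.2 then ((1 / Real.sqrt d : ℝ) : ℂ) else 0

/-- The maximally entangled state `|ψ⁺⟩⟨ψ⁺|`. -/
def psiProj {d : ℕ} : Matrix (Fin d × Fin d) (Fin d × Fin d) ℂ :=
  outer psiPlus

section Aux

variable {d : ℕ}

/-- The "reshuffled" matrix `M_{(p₁,q₁),(r,s)} = ρ((p₁,r),(q₁,s))`. -/
def matOf (ρ : Matrix (Fin d × Fin d) (Fin d × Fin d) ℂ) :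
    Matrix (Fin d × Fin d) (Fin d × Fin d) ℂ :=
  fun p q => ρ ((p.1, q.1)) ((p.2, q.2))

/-- The matrix of a linear map on matrices in the std basis. -/
def lamMat (Λ : Matrix (Fin d) (Fin d) ℂ →ₗ[ℂ] Matrix (Fin d) (Fin d) ℂ) :
    Matrix (Fin d × Fin d) (Fin d × Fin d) ℂ :=
  fun r a => Λ (Matrix.single r.1 r.2 1) a.1 a.2

lemma check_eq_transpose (ρ : Matrix (Fin d × Fin d) (Fin d × Fin d) ℂ) :
    check ρ = (matOf ρ)ᵀ := by
  ext p q
  simp only [check, ptransB, Matrix.mul_apply, matOf, Matrix.transpose_apply, swapOp]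
  rw [Fintype.sum_prod_type]
  simp only [Fintype.sum_prod_type]
  simp [ite_and, Finset.sum_ite_eq, Finset.sum_ite_eq']

lemma applyRight_eq_mul (Λ : Matrix (Fin d) (Fin d) ℂ →ₗ[ℂ] Matrix (Fin d) (Fin d) ℂ)
    (ρ : Matrix (Fin d × Fin d) (Fin d × Fin d) ℂ) (p q : Fin d × Fin d) :
    applyRight Λ ρ p q = (matOf ρ * lamMat Λ) (p.1, q.1) (p.2, q.2) := by
  simp only [applyRight, Matrix.mul_apply, matOf, lamMat]
  rw [Fintype.sum_prod_type]

def lamOf (L : Matrix (Fin d × Fin d) (Fin d × Fin d) ℂ) :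
    Matrix (Fin d) (Fin d) ℂ →ₗ[ℂ] Matrix (Fin d) (Fin d) ℂ where
  toFun X := Matrix.of (fun a b => ∑ r : Fin d, ∑ s : Fin d, X r s * L (r, s) (a, b))
  map_add' X Y := by
    ext a b
    simp [add_mul, Finset.sum_add_distrib]
  map_smul' c X := by
    ext a b
    simp [Finset.mul_sum, mul_assoc]

lemma lamOf_aux (L : Matrix (Fin d × Fin d) (Fin d × Fin d) ℂ) :
    ∃ Λ : Matrix (Fin d) (Fin d) ℂ →ₗ[ℂ] Matrix (Fin d) (Fin d) ℂ, lamMat Λ = L := by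
  refine ⟨lamOf L, ?_⟩
  ext r a
  simp only [lamMat, lamOf, LinearMap.coe_mk, AddHom.coe_mk, Matrix.of_apply,
    Matrix.single, ite_mul, one_mul, zero_mul]
  rw [Finset.sum_comm]
  rw [Finset.sum_eq_single r.2]
  · rw [Finset.sum_eq_single r.1] <;> simp +contextual [eq_comm]
  · intro s _ hs
    apply Finset.sum_eq_zero
    intro x _
    have hx : ¬(r.1 = x ∧ r.2 = s) := fun h => hs h.2.symm
    simp [hx]
  · simp

lemma lamMat_injective :
    Function.Injective (lamMat (d := d)) := by
  intro Λ₁ Λ₂ h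
  apply LinearMap.ext
  intro X
  rw [Matrix.matrix_eq_sum_single X]
  simp only [map_sum]
  refine Finset.sum_congr rfl fun r _ => Finset.sum_congr rfl fun s _ => ?_
  have hb : (Matrix.single r s (X r s) : Matrix (Fin d) (Fin d) ℂ)
      = X r s • Matrix.single r s 1 := by
    ext a b; simp [Matrix.single, Matrix.smul_apply]
  rw [hb, _root_.map_smul, _root_.map_smul]
  congr 1
  ext a b
  exact congrFun (congrFun h (r, s)) (a, b)

end Aux

/-- D'Ariano–Lo Presti faithfulness criterion. -/
theorem faithful_iff_check_invertible {d : ℕ}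
    (ρ₀ : Matrix (Fin d × Fin d) (Fin d × Fin d) ℂ)
    (hpsd : ρ₀.PosSemidef) (htr : ρ₀.trace = 1) :
    Faithful ρ₀ ↔ IsUnit (check ρ₀) := by
  rw [check_eq_transpose]
  have hdet : IsUnit (matOf ρ₀)ᵀ ↔ IsUnit (matOf ρ₀) := by
    rw [Matrix.isUnit_iff_isUnit_det, Matrix.isUnit_iff_isUnit_det, Matrix.det_transpose]
  rw [hdet]
  constructor
  · intro hF
    by_contra hu
    rw [Matrix.isUnit_iff_isUnit_det, isUnit_iff_ne_zero, not_not] at hu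
    obtain ⟨v, hv, hMv⟩ := (Matrix.exists_mulVec_eq_zero_iff).mpr hu
    set L : Matrix (Fin d × Fin d) (Fin d × Fin d) ℂ :=
      Matrix.vecMulVec v (fun _ => 1) with hL
    obtain ⟨Λ, hΛ⟩ := lamOf_aux L
    have hML : matOf ρ₀ * L = 0 := by
      ext i j
      simp only [Matrix.mul_apply, hL, Matrix.vecMulVec_apply, Matrix.zero_apply, mul_one]
      exact congrFun hMv i
    have happ : applyRight Λ ρ₀ = applyRight 0 ρ₀ := by
      ext p q
      rw [applyRight_eq_mul, hΛ, hML]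
      simp [applyRight]
    have := hF happ
    apply hv
    funext k
    have : L k ((⟨0, Fin.pos_iff_nonempty.mpr ⟨k.1⟩⟩ : Fin d),
        (⟨0, Fin.pos_iff_nonempty.mpr ⟨k.1⟩⟩ : Fin d)) = 0 := by
      rw [← hΛ, this]
      simp [lamMat]
    simpa [hL, Matrix.vecMulVec_apply] using this
  · intro hu Λ₁ Λ₂ h
    simp only at h
    have hM : matOf ρ₀ * lamMat Λ₁ = matOf ρ₀ * lamMat Λ₂ := by
      ext i j
      have := congrFun (congrFun h ((i.1, j.1))) ((i.2, j.2))
      rwa [applyRight_eq_mul, applyRight_eq_mul] at this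
    apply lamMat_injective
    calc lamMat Λ₁ = ↑hu.unit⁻¹ * (matOf ρ₀ * lamMat Λ₁) := by
          rw [← Matrix.mul_assoc, IsUnit.val_inv_mul, Matrix.one_mul]
      _ = ↑hu.unit⁻¹ * (matOf ρ₀ * lamMat Λ₂) := by rw [hM]
      _ = lamMat Λ₂ := by rw [← Matrix.mul_assoc, IsUnit.val_inv_mul, Matrix.one_mul]
end
end

section
/- Conversely, if Z is a Hermitian operator on C^d ⊗ C^d with ⟨x,y|Z|x,y⟩ ≥ 0 for all product vectors, then the unique linear map Λ with Z = (I ⊗ Λ)(|ψ⁺⟩⟨ψ⁺|) is a positive map, and it is given explicitly by Λ(ρ) = Σ_{ijkl} ⟨ij|Z|kl⟩ ⟨i|ρ|k⟩ |j⟩⟨l| (up to a factor d). -/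
open Matrix Finset
open scoped ComplexOrder

noncomputable section

/-- The product vector `|x⟩ ⊗ |y⟩`. -/
def tensorVec {d : ℕ} (x y : Fin d → ℂ) : Fin d × Fin d → ℂ :=
  fun p => x p.1 * y p.2


/-- The explicit map `ρ ↦ d ∑ ⟨ij|Z|kl⟩ ⟨i|ρ|k⟩ |j⟩⟨l|` as a linear map. -/
def choiLam {d : ℕ} (Z : Matrix (Fin d × Fin d) (Fin d × Fin d) ℂ) :
    Matrix (Fin d) (Fin d) ℂ →ₗ[ℂ] Matrix (Fin d) (Fin d) ℂ where
  toFun ρ := fun j l => (d : ℂ) * ∑ i : Fin d, ∑ k : Fin d, Z (i, j) (k, l) * ρ i k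
  map_add' ρ σ := by
    funext j l
    simp [Matrix.add_apply, mul_add, Finset.sum_add_distrib]
    rfl
  map_smul' c ρ := by
    funext j l
    simp only [Matrix.smul_apply, smul_eq_mul, RingHom.id_apply, Pi.smul_apply, Finset.mul_sum]
    change _ = c * ∑ x : Fin d, ∑ i : Fin d, (d : ℂ) * (Z (x, j) (i, l) * ρ x i)
    simp only [Finset.mul_sum]
    refine Finset.sum_congr rfl fun i _ => Finset.sum_congr rfl fun k _ => by ring

lemma choiLam_apply {d : ℕ} (Z : Matrix (Fin d × Fin d) (Fin d × Fin d) ℂ)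
    (ρ : Matrix (Fin d) (Fin d) ℂ) :
    choiLam Z ρ = fun j l => (d : ℂ) * ∑ i : Fin d, ∑ k : Fin d, Z (i, j) (k, l) * ρ i k := rfl

lemma choiLam_std {d : ℕ} (Z : Matrix (Fin d × Fin d) (Fin d × Fin d) ℂ) (r s j l : Fin d) :
    choiLam Z (Matrix.single r s 1) j l = (d : ℂ) * Z (r, j) (s, l) := by
  simp only [choiLam_apply, LinearMap.coe_mk, AddHom.coe_mk, Matrix.single, Matrix.of_apply,
    mul_ite, mul_one, mul_zero]
  congr 1
  rw [Finset.sum_eq_single r]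
  · rw [Finset.sum_eq_single s] <;> simp +contextual [eq_comm]
  · intro b _ hb; apply Finset.sum_eq_zero; intro k _; rw [if_neg]; rintro ⟨h1, -⟩; exact hb h1.symm
  · simp

lemma applyRight_psiProj {d : ℕ}
    (Λ : Matrix (Fin d) (Fin d) ℂ →ₗ[ℂ] Matrix (Fin d) (Fin d) ℂ)
    (p q : Fin d × Fin d) :
    applyRight Λ (psiProj (d := d)) p q
      = (1 / (d : ℂ)) * Λ (Matrix.single p.1 q.1 1) p.2 q.2 := by
  have hc : ((1 / Real.sqrt d : ℝ) : ℂ) * ((1 / Real.sqrt d : ℝ) : ℂ) = 1 / (d : ℂ) := by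
    rw [← Complex.ofReal_mul]
    rw [show (1 / Real.sqrt d : ℝ) * (1 / Real.sqrt d) = 1 / d by
      rw [div_mul_div_comm, one_mul, Real.mul_self_sqrt (Nat.cast_nonneg d)]]
    push_cast
    ring
  unfold applyRight psiProj outer psiPlus
  rw [Finset.sum_eq_single p.1]
  · rw [Finset.sum_eq_single q.1]
    · simp only [Matrix.vecMulVec_apply, Pi.star_apply, eq_self_iff_true, if_true,
        Complex.star_def, Complex.conj_ofReal]
      rw [hc]
    · intro s _ hs
      simp [Matrix.vecMulVec_apply, Ne.symm hs, hs.symm]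
    · simp
  · intro r _ hr
    apply Finset.sum_eq_zero
    intro s _
    simp [Matrix.vecMulVec_apply, Ne.symm hr, hr.symm]
  · simp

lemma sum4_perm {d : ℕ} (f : Fin d → Fin d → Fin d → Fin d → ℂ) :
    ∑ j, ∑ l, ∑ i, ∑ k, f i j k l = ∑ i, ∑ j, ∑ k, ∑ l, f i j k l :=
  calc ∑ j, ∑ l, ∑ i, ∑ k, f i j k l
      = ∑ j, ∑ i, ∑ l, ∑ k, f i j k l :=
        Finset.sum_congr rfl fun _ _ => Finset.sum_comm
    _ = ∑ i, ∑ j, ∑ l, ∑ k, f i j k l := Finset.sum_comm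
    _ = ∑ i, ∑ j, ∑ k, ∑ l, f i j k l :=
        Finset.sum_congr rfl fun _ _ => Finset.sum_congr rfl fun _ _ => Finset.sum_comm

lemma quadA {d : ℕ} (Z : Matrix (Fin d × Fin d) (Fin d × Fin d) ℂ)
    (X : Matrix (Fin d) (Fin d) ℂ) (y : Fin d → ℂ) :
    star y ⬝ᵥ ((choiLam Z X) *ᵥ y)
      = (d : ℂ) * ∑ p : Fin d × Fin d, ∑ q : Fin d × Fin d,
          (starRingEnd ℂ) (y p.2) * y q.2 * Z p q * X p.1 q.1 := by
  simp only [dotProduct, mulVec, choiLam_apply, LinearMap.coe_mk, AddHom.coe_mk, Pi.star_apply,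
    Complex.star_def, Fintype.sum_prod_type, Finset.mul_sum, Finset.sum_mul]
  rw [← sum4_perm (fun i j k l => (d:ℂ) * ((starRingEnd ℂ) (y j) * y l * Z (i,j) (k,l) * X i k))]
  exact Finset.sum_congr rfl fun j _ => Finset.sum_congr rfl fun l _ =>
    Finset.sum_congr rfl fun i _ => Finset.sum_congr rfl fun k _ => by ring

lemma quadB {d : ℕ} (Z : Matrix (Fin d × Fin d) (Fin d × Fin d) ℂ)
    (B : Matrix (Fin d) (Fin d) ℂ) (y : Fin d → ℂ) :
    ∑ m : Fin d, star (tensorVec (B m) y) ⬝ᵥ (Z *ᵥ tensorVec (B m) y)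
      = ∑ p : Fin d × Fin d, ∑ q : Fin d × Fin d,
          (starRingEnd ℂ) (y p.2) * y q.2 * Z p q * (Bᴴ * B) p.1 q.1 := by
  have h1 : ∀ m : Fin d, star (tensorVec (B m) y) ⬝ᵥ (Z *ᵥ tensorVec (B m) y)
      = ∑ p : Fin d × Fin d, ∑ q : Fin d × Fin d,
        (starRingEnd ℂ) (B m p.1) * (starRingEnd ℂ) (y p.2) * Z p q * (B m q.1 * y q.2) := by
    intro m
    simp only [dotProduct, mulVec, Pi.star_apply, tensorVec, Complex.star_def, _root_.map_mul,
      Finset.mul_sum]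
    exact Finset.sum_congr rfl fun p _ => Finset.sum_congr rfl fun q _ => by ring
  rw [Finset.sum_congr rfl fun m _ => h1 m]
  rw [show ∀ f : Fin d → (Fin d × Fin d) → (Fin d × Fin d) → ℂ,
      ∑ m, ∑ p, ∑ q, f m p q = ∑ p, ∑ q, ∑ m, f m p q from fun f => by
    rw [Finset.sum_comm]; exact Finset.sum_congr rfl fun p _ => Finset.sum_comm]
  refine Finset.sum_congr rfl fun p _ => Finset.sum_congr rfl fun q _ => ?_
  rw [Matrix.mul_apply, Finset.mul_sum]
  refine Finset.sum_congr rfl fun m _ => ?_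
  simp only [Matrix.conjTranspose_apply, Complex.star_def]
  ring

lemma choiLam_isHermitian {d : ℕ} {Z : Matrix (Fin d × Fin d) (Fin d × Fin d) ℂ}
    {X : Matrix (Fin d) (Fin d) ℂ} (hherm : Z.IsHermitian) (hX : X.IsHermitian) :
    (choiLam Z X).IsHermitian := by
  ext j l
  rw [conjTranspose_apply]
  simp only [conjTranspose_apply, choiLam_apply, LinearMap.coe_mk, AddHom.coe_mk, Complex.star_def,
    _root_.map_mul, map_sum, Complex.conj_natCast]
  congr 1
  rw [Finset.sum_comm]
  refine Finset.sum_congr rfl fun i _ => Finset.sum_congr rfl fun k _ => ?_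
  rw [show (starRingEnd ℂ) (Z (k, l) (i, j)) = Z (i, j) (k, l) from hherm.apply _ _,
    show (starRingEnd ℂ) (X k i) = X i k from hX.apply _ _]

/-- a block-positive Hermitian operator is the Choi matrix of a unique
linear map, which is positive and given by the explicit formula
`Λ(ρ) = d ∑ ⟨ij|Z|kl⟩ ⟨i|ρ|k⟩ |j⟩⟨l|`. -/
theorem posMap_of_blockPositive {d : ℕ} (hd : 0 < d)
    (Z : Matrix (Fin d × Fin d) (Fin d × Fin d) ℂ)
    (hherm : Z.IsHermitian)
    (hblock : ∀ x y : Fin d → ℂ,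
      0 ≤ star (tensorVec x y) ⬝ᵥ (Z *ᵥ tensorVec x y)) :
    ∃ Λ : Matrix (Fin d) (Fin d) ℂ →ₗ[ℂ] Matrix (Fin d) (Fin d) ℂ,
      applyRight Λ (psiProj (d := d)) = Z ∧
      PosMap Λ ∧
      (∀ (ρ : Matrix (Fin d) (Fin d) ℂ) (j l : Fin d),
        Λ ρ j l = (d : ℂ) * ∑ i : Fin d, ∑ k : Fin d, Z (i, j) (k, l) * ρ i k) ∧
      (∀ Λ' : Matrix (Fin d) (Fin d) ℂ →ₗ[ℂ] Matrix (Fin d) (Fin d) ℂ,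
        applyRight Λ' (psiProj (d := d)) = Z → Λ' = Λ) := by
  have hd' : (d : ℂ) ≠ 0 := Nat.cast_ne_zero.mpr hd.ne'
  have hstdeq : ∀ Λ' : Matrix (Fin d) (Fin d) ℂ →ₗ[ℂ] Matrix (Fin d) (Fin d) ℂ,
      applyRight Λ' (psiProj (d := d)) = Z →
      ∀ r s : Fin d, Λ' (Matrix.single r s 1) = choiLam Z (Matrix.single r s 1) := by
    intro Λ' hΛ' r s
    funext j l
    have h1 := congrFun (congrFun hΛ' (r, j)) (s, l)
    rw [applyRight_psiProj] at h1
    rw [choiLam_std]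
    rw [one_div, inv_mul_eq_iff_eq_mul₀ hd'] at h1
    exact h1
  refine ⟨choiLam Z, ?_, ?_, fun ρ j l => rfl, ?_⟩
  · funext p q
    rw [applyRight_psiProj, choiLam_std, ← mul_assoc, one_div, inv_mul_cancel₀ hd', one_mul]
  · intro X hX
    obtain ⟨B, hB⟩ : ∃ B : Matrix (Fin d) (Fin d) ℂ, X = Bᴴ * B := by
      open scoped MatrixOrder in exact CStarAlgebra.nonneg_iff_eq_star_mul_self.mp hX.nonneg
    refine Matrix.PosSemidef.of_dotProduct_mulVec_nonneg (choiLam_isHermitian hherm hX.1) fun y => ?_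
    rw [quadA, hB, ← quadB]
    refine mul_nonneg ?_ (Finset.sum_nonneg fun m _ => hblock (B m) y)
    exact_mod_cast Nat.zero_le d
  · intro Λ' hΛ'
    have hstd := hstdeq Λ' hΛ'
    refine LinearMap.ext fun ρ => ?_
    have hρ : ρ = ∑ r : Fin d, ∑ s : Fin d, ρ r s • Matrix.single r s 1 := by
      conv_lhs => rw [Matrix.matrix_eq_sum_single ρ]
      refine Finset.sum_congr rfl fun r _ => Finset.sum_congr rfl fun s _ => ?_
      rw [Matrix.smul_single, smul_eq_mul, mul_one]
    rw [hρ, map_sum, map_sum]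
    refine Finset.sum_congr rfl fun r _ => ?_
    rw [map_sum, map_sum]
    refine Finset.sum_congr rfl fun s _ => ?_
    rw [_root_.map_smul, _root_.map_smul, hstd]
end
end

section
/- The isotropic state ρ(λ) = (1−λ) I_{AB} + λ |ψ⁺⟩⟨ψ⁺| with λ = 1/(d+1) admits the explicit separable decomposition ρ₀ = (d/(d+1))·(1/4^d) Σ_z ρ_z + (1/(d(d+1))) Σ_{j=1}^d |j⟩⟨j| ⊗ |j⟩⟨j|, where ρ_z = |Φ_z⟩⟨Φ_z| ⊗ |Φ_{z*}⟩⟨Φ_{z*}| and the sum runs over all vectors z ∈ {±1, ±i}^d. -/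
open Matrix Finset
open scoped ComplexOrder

noncomputable section

section Aux

lemma geom_four (w : ℂ) (hw : w ^ 4 = 1) :
    ∑ k : Fin 4, w ^ (k : ℕ) = if w = 1 then 4 else 0 := by
  rw [Fin.sum_univ_four]
  by_cases h : w = 1
  · simp [h]; norm_num
  · rw [if_neg h]
    have h2 : (w - 1) * (w^0 + w^1 + w^2 + w^3) = 0 := by
      have : (w - 1) * (w^0 + w^1 + w^2 + w^3) = w^4 - 1 := by ring
      rw [this, hw]; ring
    rcases mul_eq_zero.mp h2 with h3 | h3
    · exact absurd (sub_eq_zero.mp h3) h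
    · simpa using h3

lemma ite_I_eq_one (p q r s : Prop) [Decidable p] [Decidable q] [Decidable r] [Decidable s] :
    ((if p then Complex.I else 1) * (if q then Complex.I else 1) *
     (if r then -Complex.I else 1) * (if s then -Complex.I else 1) = 1) ↔
    ((if p then 1 else 0) + (if q then 1 else 0) : ℕ) =
      (if r then 1 else 0) + (if s then 1 else 0) := by
  split_ifs <;> norm_num [Complex.ext_iff]

lemma ite_I_pow_four (p q r s : Prop) [Decidable p] [Decidable q] [Decidable r] [Decidable s] :
    ((if p then Complex.I else 1) * (if q then Complex.I else 1) *
     (if r then -Complex.I else 1) * (if s then -Complex.I else 1)) ^ 4 = 1 := by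
  split_ifs <;> ring_nf <;>
    first
      | rfl
      | exact Complex.I_pow_four
      | (rw [show (16:ℕ)=4*4 from rfl, pow_mul, Complex.I_pow_four, one_pow])
      | (rw [show (12:ℕ)=4*3 from rfl, pow_mul, Complex.I_pow_four, one_pow])
      | (rw [show (8:ℕ)=4*2 from rfl, pow_mul, Complex.I_pow_four, one_pow])

lemma char_lemma {d : ℕ} (a b c e : Fin d)
    (h : ∀ j : Fin d, ((if j = a then 1 else 0) + (if j = e then 1 else 0) : ℕ)
      = (if j = b then 1 else 0) + (if j = c then 1 else 0)) :
    (a = b ∧ c = e) ∨ (a = c ∧ b = e) := by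
  have ha := h a; have hb := h b; have hc := h c; have he := h e
  set_option maxHeartbeats 2000000 in
  by_cases hab : a = b <;> by_cases hac : a = c <;> by_cases hae : a = e <;>
    by_cases hbc : b = c <;> by_cases hbe : b = e <;> by_cases hce : c = e <;>
    simp_all <;> omega

lemma sum_z {d : ℕ} (a b c e : Fin d) :
    ∑ z : Fin d → Fin 4,
        (Complex.I ^ (z a : ℕ) * (-Complex.I) ^ (z c : ℕ) * (-Complex.I) ^ (z b : ℕ) *
          Complex.I ^ (z e : ℕ))
      = if (a = b ∧ c = e) ∨ (a = c ∧ b = e) then (4 : ℂ) ^ d else 0 := by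
  set w : Fin d → ℂ := fun j =>
    (if j = a then Complex.I else 1) * (if j = e then Complex.I else 1) *
    (if j = b then -Complex.I else 1) * (if j = c then -Complex.I else 1) with hw
  have hterm : ∀ z : Fin d → Fin 4,
      Complex.I ^ (z a : ℕ) * (-Complex.I) ^ (z c : ℕ) * (-Complex.I) ^ (z b : ℕ) *
        Complex.I ^ (z e : ℕ)
      = ∏ j, (w j) ^ (z j : ℕ) := by
    intro z
    have hpow : ∀ j, (w j) ^ (z j : ℕ) =
        (if j = a then Complex.I ^ (z j : ℕ) else 1) *
        (if j = e then Complex.I ^ (z j : ℕ) else 1) *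
        (if j = b then (-Complex.I) ^ (z j : ℕ) else 1) *
        (if j = c then (-Complex.I) ^ (z j : ℕ) else 1) := by
      intro j; simp only [hw]; split_ifs <;> simp only [mul_pow, one_pow, mul_one, one_mul]
    simp_rw [hpow]
    rw [Finset.prod_mul_distrib, Finset.prod_mul_distrib, Finset.prod_mul_distrib,
      Finset.prod_ite_eq' univ a (fun j => Complex.I ^ (z j : ℕ)),
      Finset.prod_ite_eq' univ e (fun j => Complex.I ^ (z j : ℕ)),
      Finset.prod_ite_eq' univ b (fun j => (-Complex.I) ^ (z j : ℕ)),
      Finset.prod_ite_eq' univ c (fun j => (-Complex.I) ^ (z j : ℕ))]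
    simp only [Finset.mem_univ, if_true]
    ring
  simp_rw [hterm]
  have hswap : (∏ j, ∑ k : Fin 4, w j ^ (k : ℕ)) = ∑ z : Fin d → Fin 4, ∏ j, w j ^ (z j : ℕ) := by
    rw [Finset.prod_univ_sum, Fintype.piFinset_univ]
  rw [← hswap]
  have hgeom : ∀ j, ∑ k : Fin 4, (w j) ^ (k : ℕ) = if w j = 1 then 4 else 0 := by
    intro j; exact geom_four _ (ite_I_pow_four _ _ _ _)
  simp_rw [hgeom]
  by_cases hcond : (a = b ∧ c = e) ∨ (a = c ∧ b = e)
  · rw [if_pos hcond]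
    have hall : ∀ j, w j = 1 := by
      intro j; rw [hw, ite_I_eq_one]
      rcases hcond with ⟨h1, h2⟩ | ⟨h1, h2⟩
      · subst h1; subst h2; rfl
      · subst h1; subst h2; exact add_comm _ _
    simp [hall]
  · rw [if_neg hcond]
    have : ¬ ∀ j, w j = 1 := by
      intro hall
      exact hcond (char_lemma a b c e (fun j => (ite_I_eq_one _ _ _ _).mp (by simpa [hw] using hall j)))
    push_neg at this
    obtain ⟨j, hj⟩ := this
    exact Finset.prod_eq_zero (Finset.mem_univ j) (if_neg hj)

end Aux

/-- The maximally mixed state `(1/d²)·Id` on `C^d ⊗ C^d`. -/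
def maxMixed {d : ℕ} : Matrix (Fin d × Fin d) (Fin d × Fin d) ℂ :=
  ((1 / (d : ℝ) ^ 2 : ℝ) : ℂ) • (1 : Matrix (Fin d × Fin d) (Fin d × Fin d) ℂ)

/-- The vector `|Φ_z⟩ = (1/√d) ∑ⱼ zⱼ |j⟩`, where `zⱼ = i^(z j)` ranges over `{1, i, -1, -i}`. -/
def phiVec {d : ℕ} (z : Fin d → Fin 4) : Fin d → ℂ :=
  fun j => ((1 / Real.sqrt d : ℝ) : ℂ) * Complex.I ^ (z j : ℕ)

/-- The product state `ρ_z = |Φ_z⟩⟨Φ_z| ⊗ |Φ_{z*}⟩⟨Φ_{z*}|`. -/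
def rhoZ {d : ℕ} (z : Fin d → Fin 4) : Matrix (Fin d × Fin d) (Fin d × Fin d) ℂ :=
  kron (outer (phiVec z)) (outer (star ∘ phiVec z))

/-- The standard basis vector `|j⟩`. -/
def basisVec {d : ℕ} (j : Fin d) : Fin d → ℂ :=
  fun i => if i = j then 1 else 0

/-- explicit separable decomposition of the isotropic state at `λ = 1/(d+1)`. -/
theorem isotropic_explicit_decomposition {d : ℕ} (hd : 0 < d) :
    ((1 - 1 / ((d : ℝ) + 1) : ℝ) : ℂ) • maxMixed (d := d)
      + ((1 / ((d : ℝ) + 1) : ℝ) : ℂ) • psiProj (d := d)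
    = (((d : ℝ) / ((d : ℝ) + 1) * (1 / 4 ^ d) : ℝ) : ℂ) • ∑ z : Fin d → Fin 4, rhoZ z
      + ((1 / ((d : ℝ) * ((d : ℝ) + 1)) : ℝ) : ℂ) •
          ∑ j : Fin d, kron (outer (basisVec j)) (outer (basisVec j)) := by
  have hdR : (0:ℝ) < (d:ℝ) := by exact_mod_cast hd
  have hdC : ((d:ℕ):ℂ) ≠ 0 := Nat.cast_ne_zero.mpr hd.ne'
  have hdC1 : ((d:ℕ):ℂ) + 1 ≠ 0 := by
    have : (((d+1:ℕ)):ℂ) ≠ 0 := Nat.cast_ne_zero.mpr (Nat.succ_ne_zero d)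
    push_cast at this; exact this
  have h4ne : ((4:ℂ))^d ≠ 0 := pow_ne_zero _ (by norm_num)
  have hdC1' : (1:ℂ) + ((d:ℕ):ℂ) ≠ 0 := by rw [add_comm]; exact hdC1
  have hc2 : ((1 / Real.sqrt d : ℝ) : ℂ) * ((1 / Real.sqrt d : ℝ) : ℂ) = 1 / (d:ℂ) := by
    rw [← Complex.ofReal_mul,
      show (1/Real.sqrt d)*(1/Real.sqrt d) = 1/(Real.sqrt d * Real.sqrt d) by ring,
      Real.mul_self_sqrt hdR.le]
    push_cast; ring
  have hc4 : ((1 / Real.sqrt d : ℝ) : ℂ)^4 = 1 / (d:ℂ)^2 := by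
    rw [show ((1 / Real.sqrt d : ℝ) : ℂ)^4
        = (((1 / Real.sqrt d : ℝ) : ℂ) * ((1 / Real.sqrt d : ℝ) : ℂ))
          * (((1 / Real.sqrt d : ℝ) : ℂ) * ((1 / Real.sqrt d : ℝ) : ℂ)) by ring, hc2]
    ring
  ext ⟨a, b⟩ ⟨c, e⟩
  have h1 : (maxMixed (d:=d)) (a,b) (c,e) = (1/(d:ℂ)^2) * (if a = c ∧ b = e then 1 else 0) := by
    simp only [maxMixed, Matrix.smul_apply, Matrix.one_apply, smul_eq_mul, Prod.mk.injEq]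
    push_cast; ring
  have h2 : (psiProj (d:=d)) (a,b) (c,e) = (1/(d:ℂ)) * (if a = b ∧ c = e then 1 else 0) := by
    simp only [psiProj, outer, Matrix.vecMulVec_apply, psiPlus, Pi.star_apply]
    split_ifs <;> simp_all [Complex.star_def, Complex.conj_ofReal, hc2]
  have h3 : ∀ z : Fin d → Fin 4, rhoZ z (a,b) (c,e)
      = ((1 / Real.sqrt d : ℝ):ℂ)^4 *
        (Complex.I ^ (z a : ℕ) * (-Complex.I) ^ (z c : ℕ) * (-Complex.I) ^ (z b : ℕ) *
          Complex.I ^ (z e : ℕ)) := by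
    intro z
    simp only [rhoZ, kron, Matrix.kroneckerMap_apply, outer, Matrix.vecMulVec_apply,
      Pi.star_apply, Function.comp_apply, star_star, phiVec, Complex.star_def, _root_.map_mul,
      _root_.map_pow, _root_.map_neg, Complex.conj_ofReal, Complex.conj_I, Complex.conj_conj, neg_neg]
    ring
  have h4 : (∑ z : Fin d → Fin 4, rhoZ z) (a,b) (c,e)
      = (1/(d:ℂ)^2) * (if (a = b ∧ c = e) ∨ (a = c ∧ b = e) then (4:ℂ)^d else 0) := by
    simp only [Matrix.sum_apply]
    simp only [h3]
    rw [← Finset.mul_sum, sum_z a b c e, hc4]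
  have h5 : (∑ j : Fin d, kron (outer (basisVec j)) (outer (basisVec j))) (a,b) (c,e)
      = if b = a ∧ c = a ∧ e = a then 1 else 0 := by
    simp only [Matrix.sum_apply, kron, Matrix.kroneckerMap_apply, outer, Matrix.vecMulVec_apply,
      Pi.star_apply, basisVec, Complex.star_def]
    rw [Finset.sum_eq_single a]
    · by_cases hb : b = a <;> by_cases hc' : c = a <;> by_cases he : e = a <;>
        simp [hb, hc', he, eq_comm]
    · intro j _ hj
      have : ¬ a = j := fun h => hj h.symm
      simp [this]
    · intro h; exact absurd (Finset.mem_univ a) h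
  simp only [Matrix.add_apply, Matrix.smul_apply, smul_eq_mul]
  rw [h1, h2, h4, h5]
  clear h1 h2 h3 h4 h5 hc2 hc4 hdR
  push_cast
  set_option maxHeartbeats 2000000 in
  by_cases hab : a = b <;> by_cases hac : a = c <;> by_cases hae : a = e <;>
    by_cases hbe : b = e <;> by_cases hce : c = e <;>
    simp_all [eq_comm]
  all_goals try ring
  all_goals have e1 : ((d:ℕ):ℂ) ≠ 0 := Nat.cast_ne_zero.mpr hd.ne'
  all_goals have e2 : (1:ℂ) + ((d:ℕ):ℂ) ≠ 0 := by rw [add_comm]; exact_mod_cast Nat.succ_ne_zero d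
  all_goals have h14 : ((4:ℂ)⁻¹)^d * (4:ℂ)^d = 1 := by rw [← mul_pow]; norm_num
  all_goals rw [mul_assoc _ (((4:ℂ)⁻¹)^d) ((4:ℂ)^d), h14, mul_one]
  all_goals field_simp
  all_goals ring
end
end

section
/- The uniform mixture over all z ∈ {±1,±i}^d of the product states ρ_z = |Φ_z⟩⟨Φ_z| ⊗ |Φ_{z*}⟩⟨Φ_{z*}| equals I_{AB} + (1/d)|ψ⁺⟩⟨ψ⁺| − (1/d²) Σ_{j=1}^d |jj⟩⟨jj|. -/
open Matrix Finset
open scoped ComplexOrder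

noncomputable section

lemma sumI : ∀ p q : ℕ, p ≤ 2 → q ≤ 2 →
    ∑ x : Fin 4, Complex.I ^ ((x:ℕ)*p) * (-Complex.I) ^ ((x:ℕ)*q)
    = if p = q then 4 else 0 := by
  intro p q hp hq
  rw [Fin.sum_univ_eq_sum_range (fun n => Complex.I ^ (n*p) * (-Complex.I) ^ (n*q))]
  interval_cases p <;> interval_cases q <;>
    norm_num [Finset.sum_range_succ, pow_succ, Complex.I_sq]

lemma prodInd {d : ℕ} (a b c e : Fin d) :
    (∏ j : Fin d, if ((if j = a then 1 else 0) + (if j = e then 1 else 0) : ℕ)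
        = (if j = b then 1 else 0) + (if j = c then 1 else 0) then (1:ℂ) else 0)
    = (if a = c ∧ b = e then 1 else 0) + (if a = b ∧ c = e then 1 else 0)
      - (if a = b ∧ a = c ∧ a = e then 1 else 0) := by
  by_cases h1 : a = c ∧ b = e <;> by_cases h2 : a = b ∧ c = e
  · obtain ⟨rfl, rfl⟩ := h1
    obtain ⟨rfl, -⟩ := h2
    simp
  · obtain ⟨rfl, rfl⟩ := h1
    rw [if_pos ⟨rfl, rfl⟩, if_neg h2, if_neg (by rintro ⟨h, -, -⟩; exact h2 ⟨h, h⟩)]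
    rw [Finset.prod_eq_one (fun j _ => by rw [if_pos (by split_ifs <;> omega)])]
    ring
  · obtain ⟨rfl, rfl⟩ := h2
    rw [if_neg h1, if_pos ⟨rfl, rfl⟩, if_neg (by rintro ⟨-, h, -⟩; exact h1 ⟨h, h⟩)]
    rw [Finset.prod_eq_one (fun j _ => by rw [if_pos (by split_ifs <;> omega)])]
    ring
  · rw [if_neg h1, if_neg h2, if_neg (by rintro ⟨h3, h4, h5⟩; exact h1 ⟨h4, h3.symm.trans h5⟩)]
    by_cases hab : a = b
    · subst hab
      have hce : ¬ c = e := fun h => h2 ⟨rfl, h⟩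
      rw [Finset.prod_eq_zero (Finset.mem_univ c)
        (by rw [if_neg (by split_ifs <;> first | omega | simp_all)])]
      ring
    · by_cases hac : a = c
      · subst hac
        have hbe : ¬ b = e := fun h => h1 ⟨rfl, h⟩
        rw [Finset.prod_eq_zero (Finset.mem_univ e)
          (by rw [if_neg (by split_ifs <;> first | omega | simp_all)])]
        ring
      · rw [Finset.prod_eq_zero (Finset.mem_univ a)
          (by rw [if_neg (by split_ifs <;> first | omega | simp_all)])]
        ring


lemma rhoZ_entry {d : ℕ} (hs : (((1 / Real.sqrt d : ℝ) : ℂ))^2 = 1/(d:ℂ))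
    (z : Fin d → Fin 4) (a b c e : Fin d) : rhoZ z (a,b) (c,e)
    = (1/(d:ℂ))^2 * (Complex.I^(z a:ℕ) * Complex.I^(z e:ℕ)
        * ((-Complex.I)^(z b:ℕ) * (-Complex.I)^(z c:ℕ))) := by
  simp only [rhoZ, kron, Matrix.kroneckerMap_apply, outer, Matrix.vecMulVec_apply,
    Function.comp, phiVec, Pi.star_apply, star_mul', star_pow, Complex.star_def,
    Complex.conj_ofReal, Complex.conj_I, RingHomCompTriple.comp_apply]
  rw [← hs]
  ring_nf
  simp [Complex.conj_ofReal, Complex.conj_I]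
  ring

lemma psi_entry {d : ℕ} (hs : (((1 / Real.sqrt d : ℝ) : ℂ))^2 = 1/(d:ℂ)) (a b c e : Fin d) :
    psiProj (d := d) (a,b) (c,e) = (1/(d:ℂ)) * (if a = b ∧ c = e then 1 else 0) := by
  simp only [psiProj, outer, Matrix.vecMulVec_apply, Pi.star_apply, psiPlus]
  by_cases h1 : a = b <;> by_cases h2 : c = e <;>
    simp [h1, h2, Complex.conj_ofReal, ← hs] <;> ring

lemma basis_entry {d : ℕ} (a b c e : Fin d) :
    (∑ j : Fin d, (kron (outer (basisVec j)) (outer (basisVec j))) (a,b) (c,e))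
    = if a = b ∧ a = c ∧ a = e then 1 else 0 := by
  simp only [kron, Matrix.kroneckerMap_apply, outer, Matrix.vecMulVec_apply,
    Pi.star_apply, basisVec, apply_ite (star : ℂ → ℂ), star_one, star_zero]
  by_cases h : a = b ∧ a = c ∧ a = e
  · obtain ⟨h1, h2, h3⟩ := h
    rw [if_pos ⟨h1, h2, h3⟩, Finset.sum_eq_single a
      (fun j _ hj => by simp [Ne.symm hj])
      (fun h => absurd (Finset.mem_univ a) h)]
    simp [← h1, ← h2, ← h3]
  · rw [if_neg h, Finset.sum_eq_zero]
    intro j _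
    by_cases h1 : a = j <;> by_cases h2 : c = j <;> by_cases h3 : b = j <;>
      by_cases h4 : e = j <;> simp_all

lemma sumG {d : ℕ} (a b c e j : Fin d) :
    ∑ x : Fin 4, ((if j = a then Complex.I ^ (x:ℕ) else 1) * (if j = e then Complex.I ^ (x:ℕ) else 1) *
      ((if j = b then (-Complex.I) ^ (x:ℕ) else 1) * (if j = c then (-Complex.I) ^ (x:ℕ) else 1)))
    = if ((if j = a then 1 else 0) + (if j = e then 1 else 0) : ℕ)
        = (if j = b then 1 else 0) + (if j = c then 1 else 0) then 4 else 0 := by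
  have hg : ∀ x : Fin 4,
      ((if j = a then Complex.I ^ (x:ℕ) else 1) * (if j = e then Complex.I ^ (x:ℕ) else 1) *
        ((if j = b then (-Complex.I) ^ (x:ℕ) else 1) * (if j = c then (-Complex.I) ^ (x:ℕ) else 1)))
      = Complex.I ^ ((x:ℕ) * ((if j = a then 1 else 0) + (if j = e then 1 else 0)))
        * (-Complex.I) ^ ((x:ℕ) * ((if j = b then 1 else 0) + (if j = c then 1 else 0))) := by
    intro x
    by_cases h1 : j = a <;> by_cases h2 : j = e <;> by_cases h3 : j = b <;> by_cases h4 : j = c <;>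
      simp [h1, h2, h3, h4, pow_mul, pow_add] <;> ring
  rw [Finset.sum_congr rfl (fun x _ => hg x),
    sumI _ _ (by split_ifs <;> omega) (by split_ifs <;> omega)]


lemma sum_pow {d : ℕ} (a b c e : Fin d) :
    ∑ z : Fin d → Fin 4, (Complex.I^(z a:ℕ) * Complex.I^(z e:ℕ)
        * ((-Complex.I)^(z b:ℕ) * (-Complex.I)^(z c:ℕ)))
    = 4^d * ((if a = c ∧ b = e then (1:ℂ) else 0) + (if a = b ∧ c = e then 1 else 0)
        - (if a = b ∧ a = c ∧ a = e then 1 else 0)) := by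
  have hsum : ∑ z : Fin d → Fin 4, (Complex.I^(z a:ℕ) * Complex.I^(z e:ℕ)
        * ((-Complex.I)^(z b:ℕ) * (-Complex.I)^(z c:ℕ)))
      = ∏ j : Fin d, ∑ x : Fin 4,
          ((if j = a then Complex.I ^ (x:ℕ) else 1) * (if j = e then Complex.I ^ (x:ℕ) else 1) *
            ((if j = b then (-Complex.I) ^ (x:ℕ) else 1) * (if j = c then (-Complex.I) ^ (x:ℕ) else 1))) := by
    rw [Finset.prod_univ_sum]
    refine Finset.sum_congr (by simp [Fintype.piFinset_univ]) (fun z _ => ?_)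
    rw [Finset.prod_mul_distrib, Finset.prod_mul_distrib, Finset.prod_mul_distrib]
    simp [Finset.prod_ite_eq']
  have hite : ∀ j : Fin d, (if ((if j = a then 1 else 0) + (if j = e then 1 else 0) : ℕ)
        = (if j = b then 1 else 0) + (if j = c then 1 else 0) then (4:ℂ) else 0)
      = 4 * (if ((if j = a then 1 else 0) + (if j = e then 1 else 0) : ℕ)
        = (if j = b then 1 else 0) + (if j = c then 1 else 0) then (1:ℂ) else 0) :=
    fun j => by split_ifs <;> ring
  rw [hsum, Finset.prod_congr rfl (fun j _ => sumG a b c e j),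
    Finset.prod_congr rfl (fun j _ => hite j), Finset.prod_mul_distrib,
    Finset.prod_const, Finset.card_univ, Fintype.card_fin, prodInd]

/-- the uniform mixture of the states `ρ_z`. -/
theorem uniform_mixture_rhoZ {d : ℕ} (hd : 0 < d) :
    ((1 / 4 ^ d : ℝ) : ℂ) • ∑ z : Fin d → Fin 4, rhoZ z
      = maxMixed (d := d) + ((1 / (d : ℝ) : ℝ) : ℂ) • psiProj (d := d)
        - ((1 / (d : ℝ) ^ 2 : ℝ) : ℂ) •
            ∑ j : Fin d, kron (outer (basisVec j)) (outer (basisVec j)) := by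
  have hdc : ((d:ℂ)) ≠ 0 := Nat.cast_ne_zero.mpr hd.ne'
  have h4d : ((4:ℂ))^d ≠ 0 := pow_ne_zero _ (by norm_num)
  have hs : (((1 / Real.sqrt d : ℝ) : ℂ))^2 = 1/(d:ℂ) := by
    have h : ((1 / Real.sqrt d : ℝ))^2 = 1/(d:ℝ) := by
      rw [div_pow, one_pow, Real.sq_sqrt (Nat.cast_nonneg d)]
    calc (((1 / Real.sqrt d : ℝ) : ℂ))^2 = (((1 / Real.sqrt d : ℝ))^2 : ℝ) := by push_cast; ring
      _ = ((1/(d:ℝ) : ℝ) : ℂ) := by rw [h]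
      _ = 1/(d:ℂ) := by push_cast; ring
  ext ⟨a, b⟩ ⟨c, e⟩
  simp only [Matrix.smul_apply, Matrix.sum_apply, Matrix.add_apply, Matrix.sub_apply,
    smul_eq_mul]
  have hone : (1 : Matrix (Fin d × Fin d) (Fin d × Fin d) ℂ) (a,b) (c,e)
      = if a = c ∧ b = e then 1 else 0 := by
    rw [Matrix.one_apply]
    simp [Prod.ext_iff]
  rw [Finset.sum_congr rfl (fun z _ => rhoZ_entry hs z a b c e), ← Finset.mul_sum,
    sum_pow a b c e, maxMixed, Matrix.smul_apply, hone, psi_entry hs a b c e,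
    basis_entry a b c e]
  simp only [smul_eq_mul]
  push_cast
  set X := (if a = c ∧ b = e then (1:ℂ) else 0) with hX
  set Y := (if a = b ∧ c = e then (1:ℂ) else 0) with hY
  set Z := (if a = b ∧ a = c ∧ a = e then (1:ℂ) else 0) with hZ
  field_simp
end
end

section
/- The isotropic state ρ(λ) = (1−λ) I_{AB} + λ|ψ⁺⟩⟨ψ⁺| with λ = 1/(d+1) is separable: it can be written as a convex combination of product states. -/
open Matrix Finset
open scoped ComplexOrder

noncomputable section

/-! ### Auxiliary lemmas -/

theorem Ipow_conj_mul (e : ℕ) : (starRingEnd ℂ) (Complex.I ^ e) * Complex.I ^ e = 1 := by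
  rw [← Complex.normSq_eq_conj_mul_self]
  norm_cast
  simp [map_pow]

theorem phiVec_norm {d : ℕ} (hd : 0 < d) (z : Fin d → Fin 4) :
    star (phiVec z) ⬝ᵥ phiVec z = 1 := by
  have hd' : (d:ℝ) ≠ 0 := by positivity
  simp only [dotProduct, Pi.star_apply, phiVec, Complex.star_def]
  have key : ∀ i : Fin d, (starRingEnd ℂ) (((1 / Real.sqrt d : ℝ) : ℂ) * Complex.I ^ (z i : ℕ)) *
      (((1 / Real.sqrt d : ℝ) : ℂ) * Complex.I ^ (z i : ℕ)) = ((1 / d : ℝ) : ℂ) := by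
    intro i
    have hr : ((1/Real.sqrt d) * (1/Real.sqrt d) : ℝ) = 1/d := by
      rw [div_mul_div_comm, one_mul, Real.mul_self_sqrt (by positivity)]
    rw [_root_.map_mul, Complex.conj_ofReal, mul_mul_mul_comm, Ipow_conj_mul, mul_one,
      ← Complex.ofReal_mul, hr]
  rw [Finset.sum_congr rfl fun i _ => key i]
  simp [Finset.sum_const]
  field_simp

theorem starPhiVec_norm {d : ℕ} (hd : 0 < d) (z : Fin d → Fin 4) :
    star (star ∘ phiVec z) ⬝ᵥ (star ∘ phiVec z) = 1 := by
  have h := phiVec_norm hd z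
  simp only [dotProduct, Pi.star_apply, Function.comp_apply, star_star] at *
  rw [← h]
  exact Finset.sum_congr rfl fun i _ => mul_comm _ _

theorem basisVec_norm {d : ℕ} (j : Fin d) :
    star (basisVec j) ⬝ᵥ basisVec j = 1 := by
  simp [dotProduct, basisVec, apply_ite]

theorem siteSum (c1 c2 : ℕ) (h1 : c1 ≤ 2) (h2 : c2 ≤ 2) :
    ∑ w : Fin 4, ((Complex.I ^ (w : ℕ)) ^ c1 * (starRingEnd ℂ) ((Complex.I ^ (w : ℕ)) ^ c2))
      = if c1 = c2 then 4 else 0 := by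
  interval_cases c1 <;> interval_cases c2 <;>
    simp [Fin.sum_univ_four, show ((0:Fin 4):ℕ) = 0 from rfl, show ((1:Fin 4):ℕ) = 1 from rfl,
      show ((2:Fin 4):ℕ) = 2 from rfl, show ((3:Fin 4):ℕ) = 3 from rfl,
      pow_succ, Complex.ext_iff] <;> norm_num

theorem forall_iff {d : ℕ} (j m k n : Fin d) :
    (∀ t : Fin d, ((if t = j then 1 else 0) + (if t = n then 1 else 0) : ℕ)
        = (if t = k then 1 else 0) + (if t = m then 1 else 0))
      ↔ ((j = k ∧ m = n) ∨ (j = m ∧ k = n)) := by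
  constructor
  · intro C
    by_cases hjk : j = k
    · left
      refine ⟨hjk, ?_⟩
      have h := C m
      by_cases hmn : m = n
      · exact hmn
      · subst hjk
        simp [hmn] at h
    · right
      have hjm : j = m := by
        have h := C j
        by_cases hjm : j = m
        · exact hjm
        · simp [hjk, hjm] at h
      have hkn : k = n := by
        have h := C k
        by_cases hkn : k = n
        · exact hkn
        · simp [show ¬ k = j from fun hh => hjk hh.symm, hkn] at h
          split_ifs at h <;> omega
      exact ⟨hjm, hkn⟩
  · rintro (⟨rfl, rfl⟩ | ⟨rfl, rfl⟩) <;> intro t <;> split_ifs <;> omega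

theorem prod_pow_ind {d : ℕ} (x : Fin d → ℂ) (j : Fin d) :
    ∏ t : Fin d, (x t) ^ (if t = j then 1 else 0) = x j := by
  calc ∏ t : Fin d, (x t) ^ (if t = j then 1 else 0)
      = ∏ t : Fin d, (if t = j then x t else 1) := by
        refine Finset.prod_congr rfl fun t _ => ?_
        split_ifs <;> simp
    _ = x j := by simp [Finset.prod_ite_eq']

theorem charSum {d : ℕ} (j m k n : Fin d) :
    ∑ z : Fin d → Fin 4,
        (Complex.I ^ (z j : ℕ) * (starRingEnd ℂ) (Complex.I ^ (z k : ℕ))) *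
          ((starRingEnd ℂ) (Complex.I ^ (z m : ℕ)) * Complex.I ^ (z n : ℕ))
      = if (j = k ∧ m = n) ∨ (j = m ∧ k = n) then (4 : ℂ) ^ d else 0 := by
  set c1 : Fin d → ℕ := fun t => (if t = j then 1 else 0) + (if t = n then 1 else 0) with hc1
  set c2 : Fin d → ℕ := fun t => (if t = k then 1 else 0) + (if t = m then 1 else 0) with hc2
  have step1 : ∀ z : Fin d → Fin 4,
      (Complex.I ^ (z j : ℕ) * (starRingEnd ℂ) (Complex.I ^ (z k : ℕ))) *
          ((starRingEnd ℂ) (Complex.I ^ (z m : ℕ)) * Complex.I ^ (z n : ℕ))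
        = ∏ t : Fin d, ((Complex.I ^ (z t : ℕ)) ^ (c1 t) *
            (starRingEnd ℂ) ((Complex.I ^ (z t : ℕ)) ^ (c2 t))) := by
    intro z
    rw [Finset.prod_mul_distrib, ← map_prod]
    simp only [hc1, hc2, pow_add, Finset.prod_mul_distrib, prod_pow_ind]
    rw [_root_.map_mul]
    ring
  calc ∑ z : Fin d → Fin 4,
        (Complex.I ^ (z j : ℕ) * (starRingEnd ℂ) (Complex.I ^ (z k : ℕ))) *
          ((starRingEnd ℂ) (Complex.I ^ (z m : ℕ)) * Complex.I ^ (z n : ℕ))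
      = ∑ z : Fin d → Fin 4, ∏ t : Fin d, ((Complex.I ^ (z t : ℕ)) ^ (c1 t) *
            (starRingEnd ℂ) ((Complex.I ^ (z t : ℕ)) ^ (c2 t))) :=
        Finset.sum_congr rfl fun z _ => step1 z
    _ = ∏ t : Fin d, ∑ w : Fin 4, ((Complex.I ^ (w : ℕ)) ^ (c1 t) *
            (starRingEnd ℂ) ((Complex.I ^ (w : ℕ)) ^ (c2 t))) := by
        rw [Finset.prod_univ_sum]
        rw [← Fintype.piFinset_univ]
    _ = ∏ t : Fin d, (if c1 t = c2 t then (4:ℂ) else 0) := by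
        refine Finset.prod_congr rfl fun t _ => ?_
        exact siteSum (c1 t) (c2 t) (by simp only [hc1]; split_ifs <;> omega)
          (by simp only [hc2]; split_ifs <;> omega)
    _ = if (j = k ∧ m = n) ∨ (j = m ∧ k = n) then (4 : ℂ) ^ d else 0 := by
        by_cases hC : ∀ t : Fin d, c1 t = c2 t
        · rw [if_pos ((forall_iff j m k n).mp hC)]
          calc ∏ t : Fin d, (if c1 t = c2 t then (4:ℂ) else 0)
              = ∏ t : Fin d, (4:ℂ) := Finset.prod_congr rfl fun t _ => if_pos (hC t)
            _ = (4:ℂ) ^ d := by simp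
        · rw [if_neg (fun h => hC ((forall_iff j m k n).mpr h))]
          push_neg at hC
          obtain ⟨t, ht⟩ := hC
          exact Finset.prod_eq_zero (Finset.mem_univ t) (if_neg ht)

theorem zsum_entry {d : ℕ} (j m k n : Fin d) :
    ∑ z : Fin d → Fin 4, (kron (outer (phiVec z)) (outer (star ∘ phiVec z))) (j,m) (k,n)
      = ((1 / Real.sqrt d : ℝ) : ℂ)^4 *
          (if (j = k ∧ m = n) ∨ (j = m ∧ k = n) then (4:ℂ)^d else 0) := by
  have key : ∀ z : Fin d → Fin 4,
      (kron (outer (phiVec z)) (outer (star ∘ phiVec z))) (j,m) (k,n)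
        = ((1 / Real.sqrt d : ℝ) : ℂ)^4 *
          ((Complex.I ^ (z j : ℕ) * (starRingEnd ℂ) (Complex.I ^ (z k : ℕ))) *
            ((starRingEnd ℂ) (Complex.I ^ (z m : ℕ)) * Complex.I ^ (z n : ℕ))) := by
    intro z
    simp only [kron, Matrix.kroneckerMap_apply, outer, Matrix.vecMulVec_apply, Pi.star_apply,
      Function.comp_apply, star_star, phiVec, Complex.star_def, _root_.map_mul,
      Complex.conj_ofReal, Complex.conj_conj]
    ring
  rw [Finset.sum_congr rfl fun z _ => key z, ← Finset.mul_sum, charSum]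

theorem diag_entry {d : ℕ} (j m k n : Fin d) :
    ∑ j' : Fin d, (kron (outer (basisVec j')) (outer (basisVec j'))) (j,m) (k,n)
      = if j = k ∧ m = n ∧ j = m then (1:ℂ) else 0 := by
  have key : ∀ j' : Fin d,
      (kron (outer (basisVec j')) (outer (basisVec j'))) (j,m) (k,n)
        = if j' = j then (if j = k ∧ m = n ∧ j = m then (1:ℂ) else 0) else 0 := by
    intro j'
    simp only [kron, Matrix.kroneckerMap_apply, outer, Matrix.vecMulVec_apply, Pi.star_apply,
      basisVec, apply_ite (star : ℂ → ℂ), star_one, star_zero]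
    by_cases hj : j = j'
    · by_cases hk : k = j'
      · by_cases hm : m = j'
        · by_cases hn : n = j'
          · simp [hj, hk, hm, hn]
          · simp [hj, hk, hm, hn, Ne.symm hn]
        · simp [hj, hk, hm, Ne.symm hm]
      · simp [hj, hk, Ne.symm hk]
    · simp [hj, Ne.symm hj]
  rw [Finset.sum_congr rfl fun x _ => key x]
  simp [Finset.sum_ite_eq]

/-- The weights of the separable decomposition. -/
def sepP (d : ℕ) : ((Fin d → Fin 4) ⊕ Fin d) → ℝ :=
  Sum.elim (fun _ => ((d:ℝ)/((d:ℝ)+1))/4^d) (fun _ => 1/((d:ℝ)*((d:ℝ)+1)))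

/-- The `A`-side vectors of the separable decomposition. -/
def sepA (d : ℕ) : ((Fin d → Fin 4) ⊕ Fin d) → Fin d → ℂ :=
  Sum.elim (fun z => phiVec z) (fun j => basisVec j)

/-- The `B`-side vectors of the separable decomposition. -/
def sepB (d : ℕ) : ((Fin d → Fin 4) ⊕ Fin d) → Fin d → ℂ :=
  Sum.elim (fun z => star ∘ phiVec z) (fun j => basisVec j)

set_option maxHeartbeats 1600000

/-- the isotropic state at `λ = 1/(d+1)` is separable. -/
theorem isotropic_separable {d : ℕ} (hd : 0 < d) :
    ∃ (n : ℕ) (p : Fin n → ℝ) (a b : Fin n → Fin d → ℂ),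
      (∀ i, 0 ≤ p i) ∧ (∑ i, p i = 1) ∧
      (∀ i, star (a i) ⬝ᵥ a i = 1) ∧ (∀ i, star (b i) ⬝ᵥ b i = 1) ∧
      ((1 - 1 / ((d : ℝ) + 1) : ℝ) : ℂ) • maxMixed (d := d)
          + ((1 / ((d : ℝ) + 1) : ℝ) : ℂ) • psiProj (d := d)
        = ∑ i, (p i : ℂ) • kron (outer (a i)) (outer (b i)) := by
  classical
  have hdR : (0:ℝ) < d := by exact_mod_cast hd
  have hdR0 : (d:ℝ) ≠ 0 := ne_of_gt hdR
  have hd1R : (d:ℝ) + 1 ≠ 0 := by positivity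
  have hdC : (d:ℂ) ≠ 0 := by exact_mod_cast Complex.ofReal_ne_zero.mpr hdR0
  have hd1C : (d:ℂ) + 1 ≠ 0 := by
    have : ((d:ℝ) + 1 : ℝ) ≠ 0 := hd1R
    exact_mod_cast Complex.ofReal_ne_zero.mpr this
  have h4C : ((4:ℂ)^d) ≠ 0 := pow_ne_zero _ (by norm_num)
  have hr2 : ((1 / Real.sqrt d : ℝ) : ℂ) * ((1 / Real.sqrt d : ℝ) : ℂ) = 1/(d:ℂ) := by
    rw [← Complex.ofReal_mul, div_mul_div_comm, one_mul,
      Real.mul_self_sqrt (by positivity)]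
    push_cast
    ring
  have hr4 : ((1 / Real.sqrt d : ℝ) : ℂ)^4 = 1/(d:ℂ)^2 := by
    rw [show ((1 / Real.sqrt d : ℝ) : ℂ)^4
        = (((1 / Real.sqrt d : ℝ) : ℂ) * ((1 / Real.sqrt d : ℝ) : ℂ))^2 by ring, hr2]
    rw [div_pow, one_pow]
  set e := Fintype.equivFin ((Fin d → Fin 4) ⊕ Fin d) with he
  refine ⟨Fintype.card ((Fin d → Fin 4) ⊕ Fin d),
    fun i => sepP d (e.symm i), fun i => sepA d (e.symm i), fun i => sepB d (e.symm i),
    ?_, ?_, ?_, ?_, ?_⟩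
  · intro i
    rcases hsi : e.symm i with z | j <;>
      simp only [hsi, sepP, Sum.elim_inl, Sum.elim_inr] <;> positivity
  · rw [Equiv.sum_comp e.symm (sepP d), Fintype.sum_sum_type]
    simp only [sepP, Sum.elim_inl, Sum.elim_inr, Finset.sum_const, Finset.card_univ,
      Fintype.card_fun, Fintype.card_fin, nsmul_eq_mul]
    push_cast
    field_simp
  · intro i
    rcases hsi : e.symm i with z | j
    · simpa only [hsi, sepA, Sum.elim_inl] using phiVec_norm hd z
    · simpa only [hsi, sepA, Sum.elim_inr] using basisVec_norm j
  · intro i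
    rcases hsi : e.symm i with z | j
    · simpa only [hsi, sepB, Sum.elim_inl] using starPhiVec_norm hd z
    · simpa only [hsi, sepB, Sum.elim_inr] using basisVec_norm j
  · have hsum : (∑ i, ((sepP d (e.symm i) : ℝ) : ℂ) •
          kron (outer (sepA d (e.symm i))) (outer (sepB d (e.symm i))))
        = ∑ x, ((sepP d x : ℝ) : ℂ) • kron (outer (sepA d x)) (outer (sepB d x)) :=
      Fintype.sum_equiv e.symm _ _ (fun i => rfl)
    rw [hsum, Fintype.sum_sum_type]
    simp only [sepP, sepA, sepB, Sum.elim_inl, Sum.elim_inr]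
    ext ⟨j, m⟩ ⟨k, n⟩
    simp only [Matrix.add_apply, Matrix.smul_apply, Matrix.sum_apply, smul_eq_mul]
    rw [← Finset.mul_sum, ← Finset.mul_sum, zsum_entry, diag_entry]
    simp only [maxMixed, Matrix.smul_apply, Matrix.one_apply, smul_eq_mul, psiProj, outer,
      Matrix.vecMulVec_apply, Pi.star_apply, psiPlus, Complex.star_def, Prod.mk.injEq,
      apply_ite (starRingEnd ℂ), map_zero, Complex.conj_ofReal]
    clear hsum he
    clear e
    split_ifs <;>
      first
        | (exfalso; simp only [Fin.ext_iff, not_or, not_and] at *; omega)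
        | ((rw [hr4]; (try rw [hr2]); push_cast; field_simp) <;> ring)
end
end

section
/- Let σ be a state on C^d ⊗ C^d with Tr_A[σ] = I_B (the maximally mixed state on the B factor). If σ − (d/(d+1)) I_{AB} is positive semidefinite, then σ is separable. -/
open Matrix Finset
open scoped ComplexOrder

noncomputable section

/-- Partial trace over the first tensor factor. -/
def trA {d : ℕ} (ρ : Matrix (Fin d × Fin d) (Fin d × Fin d) ℂ) :
    Matrix (Fin d) (Fin d) ℂ :=
  fun r s => ∑ m : Fin d, ρ (m, r) (m, s)

/-- Separability: a convex combination of product states. -/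
def Separable {d : ℕ} (σ : Matrix (Fin d × Fin d) (Fin d × Fin d) ℂ) : Prop :=
  ∃ (n : ℕ) (p : Fin n → ℝ) (A B : Fin n → Matrix (Fin d) (Fin d) ℂ),
    (∀ i, 0 ≤ p i) ∧ (∑ i, p i = 1) ∧
    (∀ i, (A i).PosSemidef ∧ (A i).trace = 1) ∧
    (∀ i, (B i).PosSemidef ∧ (B i).trace = 1) ∧
    σ = ∑ i, (p i : ℂ) • kron (A i) (B i)






/-- diagonal entries of PSD matrices are nonneg -/
lemma psd_diag_nonneg {n : Type*} [Fintype n] [DecidableEq n] {M : Matrix n n ℂ}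
    (h : M.PosSemidef) (i : n) : 0 ≤ M i i := by
  have := h.dotProduct_mulVec_nonneg (Pi.single i 1)
  simpa [dotProduct, mulVec, Pi.single_apply] using this

lemma psd_trace_nonneg {n : Type*} [Fintype n] [DecidableEq n] {M : Matrix n n ℂ}
    (h : M.PosSemidef) : 0 ≤ M.trace := by
  rw [Matrix.trace]
  exact Finset.sum_nonneg fun i _ => psd_diag_nonneg h i

lemma psd_trace_real {n : Type*} [Fintype n] [DecidableEq n] {M : Matrix n n ℂ}
    (h : M.PosSemidef) : M.trace = (M.trace.re : ℂ) := by
  have him := (Complex.nonneg_iff.mp (psd_trace_nonneg h)).2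
  apply Complex.ext <;> simp [← him]

lemma psd_trace_zero {n : Type*} [Fintype n] [DecidableEq n] {M : Matrix n n ℂ}
    (h : M.PosSemidef) (htr : M.trace = 0) : M = 0 := by
  exact h.trace_eq_zero_iff.mp htr

lemma outer_posSemidef {n : Type*} [Fintype n] [DecidableEq n] (x : n → ℂ) :
    (outer x).PosSemidef := by
  have : outer x = (Matrix.replicateRow Unit (star x))ᴴ * (Matrix.replicateRow Unit (star x)) := by
    ext i j
    simp [outer, Matrix.vecMulVec_apply, Matrix.mul_apply, Matrix.replicateRow_apply,
      Matrix.conjTranspose_apply, mul_comm]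
  rw [this]
  exact Matrix.posSemidef_conjTranspose_mul_self _

lemma smul_posSemidef {n : Type*} [Fintype n] [DecidableEq n] {M : Matrix n n ℂ}
    (h : M.PosSemidef) {r : ℝ} (hr : 0 ≤ r) : ((r : ℂ) • M).PosSemidef := by
  constructor
  · unfold Matrix.IsHermitian
    rw [Matrix.conjTranspose_smul, h.1]
    congr 1
    simp
  · exact (h.smul (Complex.zero_le_real.mpr hr)).2



def omg : ℂ := Complex.exp (2 * Real.pi * Complex.I / 3)

lemma omg_prim : IsPrimitiveRoot omg 3 := Complex.isPrimitiveRoot_exp 3 (by norm_num)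

lemma omg_pow_three : omg ^ 3 = 1 := omg_prim.pow_eq_one

lemma omg_sum : 1 + omg + omg ^ 2 = 0 := by
  have := omg_prim.geom_sum_eq_zero (by norm_num)
  simpa [Finset.sum_range_succ] using this

lemma omg_norm : ‖omg‖ = 1 := by
  unfold omg
  rw [show (2 * Real.pi * Complex.I / 3 : ℂ) = (2 * Real.pi / 3 : ℝ) * Complex.I by
    push_cast; ring]
  exact Complex.norm_exp_ofReal_mul_I _

lemma omg_ne_zero : omg ≠ 0 := by
  intro h
  have := omg_norm
  rw [h] at this; simp at this

lemma omg_pow_mod (a : ℕ) : omg ^ a = omg ^ (a % 3) := by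
  conv_lhs => rw [← Nat.div_add_mod a 3]
  rw [pow_add, pow_mul, omg_pow_three, one_pow, one_mul]

def chi (t : ZMod 3) : ℂ := omg ^ t.val

lemma chi_zero : chi 0 = 1 := by simp [chi]

lemma chi_ne_zero (t : ZMod 3) : chi t ≠ 0 := pow_ne_zero _ omg_ne_zero

lemma chi_add (s t : ZMod 3) : chi (s + t) = chi s * chi t := by
  unfold chi
  rw [ZMod.val_add, ← omg_pow_mod, pow_add]

lemma chi_mul_conj (t : ZMod 3) : chi t * (starRingEnd ℂ) (chi t) = 1 := by
  rw [Complex.mul_conj]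
  norm_cast
  rw [Complex.normSq_eq_norm_sq]
  simp [chi, map_pow, omg_norm]

lemma chi_mul_conj' (t : ZMod 3) : chi t * star (chi t) = 1 := chi_mul_conj t

lemma conj_chi (t : ZMod 3) : (starRingEnd ℂ) (chi t) = chi (-t) := by
  have h1 : chi t * chi (-t) = 1 := by rw [← chi_add]; simp [chi_zero]
  have h2 := chi_mul_conj t
  rw [← h2] at h1
  exact (mul_left_cancel₀ (chi_ne_zero t) h1.symm)

lemma zmod3_cases (t : ZMod 3) : t = 0 ∨ t = 1 ∨ t = 2 := by revert t; decide

lemma zmod3_sum (f : ZMod 3 → ℂ) : ∑ t : ZMod 3, f t = f 0 + f 1 + f 2 := by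
  show ∑ t : Fin 3, f t = _
  exact Fin.sum_univ_three f

lemma chi_one_add : chi 0 + chi 1 + chi 2 = 0 := by
  have h1 : chi 1 = omg := by
    unfold chi
    rw [show ZMod.val (1 : ZMod 3) = 1 from rfl, pow_one]
  have h2 : chi 2 = omg ^ 2 := by
    unfold chi
    rw [show ZMod.val (2 : ZMod 3) = 2 from rfl]
  rw [chi_zero, h1, h2]; exact omg_sum

/-- single-coordinate character sum -/
lemma chi_sum (c : ZMod 3) :
    ∑ t : ZMod 3, chi (c * t) = if c = 0 then 3 else 0 := by
  rcases zmod3_cases c with h | h | h <;> subst h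
  · simp only [zero_mul, chi_zero, if_pos rfl, Finset.sum_const]
    simp
  · rw [zmod3_sum]
    simpa using chi_one_add
  · rw [zmod3_sum, if_neg (by decide)]
    rw [show (2 * 0 : ZMod 3) = 0 by decide, show (2 * 1 : ZMod 3) = 2 by decide,
      show (2 * 2 : ZMod 3) = 1 by decide]
    rw [show chi 0 + chi 2 + chi 1 = chi 0 + chi 1 + chi 2 by ring]
    exact chi_one_add



def coefF {d : ℕ} (i j m n : Fin d) : Fin d → ZMod 3 := fun k =>
  (if i = k then 1 else 0) + (if n = k then 1 else 0)
  - (if j = k then 1 else 0) - (if m = k then 1 else 0)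

lemma coefF_zero_iff {d : ℕ} (i j m n : Fin d) :
    (∀ k, coefF i j m n k = 0) ↔ ((i = j ∧ m = n) ∨ (i = m ∧ j = n)) := by
  constructor
  · intro h
    by_cases hij : i = j
    · subst hij
      left
      refine ⟨rfl, ?_⟩
      have hn := h n
      unfold coefF at hn
      rw [if_pos rfl] at hn
      by_cases hmn : m = n
      · exact hmn
      · rw [if_neg hmn] at hn
        -- hn : (if i = n then 1 else 0) + 1 - (if i = n then 1 else 0) - 0 = 0
        simp only [sub_zero, add_sub_cancel_left] at hn
        exact absurd hn (by decide)
    · right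
      have hi := h i
      have hji : ¬ j = i := fun hh => hij hh.symm
      unfold coefF at hi
      rw [if_pos rfl, if_neg hji] at hi
      have hni : ¬ n = i := by
        intro hni
        rw [if_pos hni] at hi
        by_cases hmi : m = i
        · rw [if_pos hmi] at hi; exact absurd hi (by decide)
        · rw [if_neg hmi] at hi; exact absurd hi (by decide)
      rw [if_neg hni] at hi
      have hmi : m = i := by
        by_contra hmi
        rw [if_neg hmi] at hi; exact absurd hi (by decide)
      refine ⟨hmi.symm, ?_⟩
      have hj := h j
      unfold coefF at hj
      have hmj : ¬ m = j := fun hh => hij (hmi.symm.trans hh)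
      have hij' : ¬ i = j := hij
      rw [if_neg hij', if_pos rfl, if_neg hmj] at hj
      by_cases hnj : n = j
      · exact hnj.symm
      · rw [if_neg hnj] at hj; exact absurd hj (by decide)
  · rintro (⟨rfl, rfl⟩ | ⟨rfl, rfl⟩) k <;> · unfold coefF; ring

lemma chi_finsum {κ : Type*} (s : Finset κ) (f : κ → ZMod 3) :
    chi (∑ x ∈ s, f x) = ∏ x ∈ s, chi (f x) := by
  induction s using Finset.cons_induction with
  | empty => simpa using chi_zero
  | cons a s ha ih => rw [Finset.sum_cons, Finset.prod_cons, chi_add, ih]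

lemma key_char_sum {d : ℕ} (i j m n : Fin d) :
    ∑ a : Fin d → ZMod 3,
      chi (a i) * (starRingEnd ℂ) (chi (a j)) * (starRingEnd ℂ) (chi (a m)) * chi (a n)
    = if (i = j ∧ m = n) ∨ (i = m ∧ j = n) then (3 : ℂ) ^ d else 0 := by
  have step1 : ∀ a : Fin d → ZMod 3,
      chi (a i) * (starRingEnd ℂ) (chi (a j)) * (starRingEnd ℂ) (chi (a m)) * chi (a n)
      = ∏ k, chi (coefF i j m n k * a k) := by
    intro a
    have : ∀ k, coefF i j m n k * a k =
        (if i = k then 1 else 0) * a k + (if n = k then 1 else 0) * a k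
        - (if j = k then 1 else 0) * a k - (if m = k then 1 else 0) * a k := by
      intro k; unfold coefF; ring
    have hsum : ∑ k, coefF i j m n k * a k = a i + a n - a j - a m := by
      simp only [this]
      rw [Finset.sum_sub_distrib, Finset.sum_sub_distrib, Finset.sum_add_distrib]
      simp [Finset.sum_ite_eq, ite_mul]
    rw [← chi_finsum, hsum, conj_chi, conj_chi]
    rw [show a i + a n - a j - a m = a i + (-(a j)) + (-(a m)) + a n by ring]
    rw [chi_add, chi_add, chi_add]
  simp only [step1]
  have hps := Finset.prod_univ_sum (t := fun _ : Fin d => (univ : Finset (ZMod 3)))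
    (f := fun k t => chi (coefF i j m n k * t))
  rw [Fintype.piFinset_univ] at hps
  rw [← hps]
  have hfac : ∀ k : Fin d, ∑ t : ZMod 3, chi (coefF i j m n k * t)
      = if coefF i j m n k = 0 then 3 else 0 := fun k => chi_sum _
  rw [Finset.prod_congr rfl (fun k _ => hfac k)]
  by_cases hc : ∀ k, coefF i j m n k = 0
  · rw [if_pos ((coefF_zero_iff i j m n).mp hc)]
    rw [Finset.prod_congr rfl (fun k _ => if_pos (hc k)), Finset.prod_const]
    simp
  · rw [if_neg (fun hor => hc ((coefF_zero_iff i j m n).mpr hor))]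
    obtain ⟨k, hk⟩ := not_forall.mp hc
    exact Finset.prod_eq_zero (mem_univ k) (if_neg hk)







/-- `Φ_τ(X) r s = ∑ X m n τ (m,r) (n,s)` -/
def Phi {d : ℕ} (τ : Matrix (Fin d × Fin d) (Fin d × Fin d) ℂ)
    (X : Matrix (Fin d) (Fin d) ℂ) : Matrix (Fin d) (Fin d) ℂ :=
  fun r s => ∑ m, ∑ n, X m n * τ (m, r) (n, s)

lemma Phi_outer_posSemidef {d : ℕ} {τ : Matrix (Fin d × Fin d) (Fin d × Fin d) ℂ}
    (hτ : τ.PosSemidef) (u : Fin d → ℂ) : (Phi τ (outer u)).PosSemidef := by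
  classical
  set C : Matrix (Fin d × Fin d) (Fin d) ℂ :=
    fun p s => star (u p.1) * (if p.2 = s then 1 else 0) with hC
  have hEq : Phi τ (outer u) = Cᴴ * τ * C := by
    ext r s
    simp only [Matrix.mul_apply, Matrix.conjTranspose_apply]
    simp only [Matrix.mul_apply, Matrix.conjTranspose_apply, hC, Phi, outer,
      Matrix.vecMulVec_apply, Pi.star_apply, Fintype.sum_prod_type, star_mul', star_star]
    simp only [apply_ite (star : ℂ → ℂ), star_one, star_zero, mul_ite, mul_one, mul_zero, ite_mul, zero_mul,
      Finset.sum_ite_eq', Finset.mem_univ, if_true, Finset.mul_sum, Finset.sum_mul]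
    rw [Finset.sum_comm]
    refine Finset.sum_congr rfl fun m _ => Finset.sum_congr rfl fun n _ => ?_
    ring
  rw [hEq]
  exact hτ.conjTranspose_mul_mul_same C

lemma kron_trace {d : ℕ} (A B : Matrix (Fin d) (Fin d) ℂ) :
    (kron A B).trace = A.trace * B.trace := by
  simp only [Matrix.trace, Matrix.diag, kron, Matrix.kroneckerMap_apply, Fintype.sum_prod_type,
    Finset.sum_mul, Finset.mul_sum]
  exact Finset.sum_comm

lemma kron_smul_right {d : ℕ} (A B : Matrix (Fin d) (Fin d) ℂ) (z : ℂ) :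
    kron A (z • B) = z • kron A B := by
  ext p q
  simp [kron, Matrix.smul_apply]
  ring

lemma one_smul_one_psd_trace {d : ℕ} (hd : 0 < d) :
    ((((d : ℝ)⁻¹ : ℝ) : ℂ) • (1 : Matrix (Fin d) (Fin d) ℂ)).PosSemidef ∧
    ((((d : ℝ)⁻¹ : ℝ) : ℂ) • (1 : Matrix (Fin d) (Fin d) ℂ)).trace = 1 := by
  constructor
  · exact smul_posSemidef Matrix.PosSemidef.one (by positivity)
  · rw [Matrix.trace_smul, Matrix.trace_one]
    simp
    field_simp

lemma separable_of_decomp {d : ℕ} (hd : 0 < d) {ι : Type} [Fintype ι] [DecidableEq ι]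
    (σ : Matrix (Fin d × Fin d) (Fin d × Fin d) ℂ) (htr : σ.trace = 1)
    (c : ι → ℝ) (hc : ∀ i, 0 ≤ c i)
    (A B' : ι → Matrix (Fin d) (Fin d) ℂ)
    (hA : ∀ i, (A i).PosSemidef ∧ (A i).trace = 1)
    (hB : ∀ i, (B' i).PosSemidef)
    (hσ : σ = ∑ i, ((c i : ℝ) : ℂ) • kron (A i) (B' i)) :
    Separable σ := by
  classical
  set e := (Fintype.equivFin ι).symm with he
  refine ⟨Fintype.card ι,
    fun k => c (e k) * ((B' (e k)).trace.re),
    fun k => A (e k),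
    fun k => if (B' (e k)).trace = 0 then (((d : ℝ)⁻¹ : ℝ) : ℂ) • 1
      else (Complex.ofReal (((B' (e k)).trace.re)⁻¹)) • B' (e k), ?_, ?_, fun k => hA _, ?_, ?_⟩
  · intro k
    exact mul_nonneg (hc _) (Complex.nonneg_iff.mp (psd_trace_nonneg (hB _))).1
  · -- sum of weights is 1
    have h1 : σ.trace = ∑ i, ((c i : ℝ) : ℂ) * (B' i).trace := by
      rw [hσ, Matrix.trace_sum]
      refine Finset.sum_congr rfl fun i _ => ?_
      rw [Matrix.trace_smul, kron_trace, (hA i).2, one_mul, smul_eq_mul]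
    rw [htr] at h1
    have h2 : (1 : ℂ) = ((∑ i, c i * (B' i).trace.re : ℝ) : ℂ) := by
      rw [h1]
      push_cast
      refine Finset.sum_congr rfl fun i _ => ?_
      conv_lhs => rw [psd_trace_real (hB i)]
    have h3 : (∑ i, c i * (B' i).trace.re : ℝ) = 1 := by exact_mod_cast h2.symm
    rw [← h3]
    exact (Equiv.sum_comp e fun i => c i * (B' i).trace.re)
  · intro k
    dsimp only
    by_cases h : (B' (e k)).trace = 0
    · rw [if_pos h]
      exact one_smul_one_psd_trace hd
    · rw [if_neg h]
      have hre : (0:ℝ) ≤ (B' (e k)).trace.re := (Complex.nonneg_iff.mp (psd_trace_nonneg (hB _))).1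
      constructor
      · exact smul_posSemidef (hB _) (by positivity)
      · rw [Matrix.trace_smul, smul_eq_mul, psd_trace_real (hB _)]
        have : (B' (e k)).trace.re ≠ 0 := by
          intro h0
          exact h (by rw [psd_trace_real (hB _), h0]; simp)
        simp only [Complex.ofReal_re]
        rw [← Complex.ofReal_mul, inv_mul_cancel₀ this, Complex.ofReal_one]
  · -- the decomposition
    rw [hσ, ← Equiv.sum_comp e fun i => ((c i : ℝ) : ℂ) • kron (A i) (B' i)]
    refine Finset.sum_congr rfl fun k _ => ?_
    dsimp only
    by_cases h : (B' (e k)).trace = 0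
    · rw [if_pos h]
      have hz : B' (e k) = 0 := psd_trace_zero (hB _) h
      have hre0 : (B' (e k)).trace.re = 0 := by rw [h]; simp
      have hk0 : kron (A (e k)) 0 = 0 := by ext p q; simp [kron]
      rw [hre0, mul_zero, hz, hk0]
      simp
    · rw [if_neg h]
      rw [kron_smul_right, smul_smul]
      congr 1
      have hre : (B' (e k)).trace = ((B' (e k)).trace.re : ℂ) := psd_trace_real (hB _)
      have hne : (B' (e k)).trace.re ≠ 0 := by
        intro h0; exact h (by rw [hre, h0]; simp)
      push_cast
      field_simp

/-- if `Tr_A σ = I_B` and `σ − (d/(d+1)) I_{AB} ⪰ 0` then `σ` is separable. -/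
theorem separable_of_sub_maxMixed_posSemidef {d : ℕ} (hd : 0 < d)
    (σ : Matrix (Fin d × Fin d) (Fin d × Fin d) ℂ)
    (hpsd : σ.PosSemidef) (htr : σ.trace = 1)
    (hred : trA σ = ((1 / (d : ℝ) : ℝ) : ℂ) • (1 : Matrix (Fin d) (Fin d) ℂ))
    (hpos : (σ - (((d : ℝ) / ((d : ℝ) + 1) : ℝ) : ℂ) • maxMixed (d := d)).PosSemidef) :
    Separable σ := by
  classical
  have hdR : ((d:ℝ)) ≠ 0 := Nat.cast_ne_zero.mpr hd.ne'
  have hdC : ((d:ℂ)) ≠ 0 := Nat.cast_ne_zero.mpr hd.ne'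
  have hd1R : ((d:ℝ) + 1) ≠ 0 := by positivity
  set cst : ℂ := ((1 / ((d:ℝ) * ((d:ℝ)+1)) : ℝ) : ℂ) with hcst
  set τ : Matrix (Fin d × Fin d) (Fin d × Fin d) ℂ := σ - cst • 1 with hτdef
  have hscal : (((d : ℝ) / ((d : ℝ) + 1) : ℝ) : ℂ) • maxMixed (d := d) = cst • 1 := by
    rw [maxMixed, smul_smul, hcst]
    congr 1
    push_cast
    field_simp
  have hτ : τ.PosSemidef := by
    rw [hτdef, ← hscal]
    exact hpos
  -- partial trace of τ
  have htrA : ∀ r s : Fin d, (∑ m, τ (m, r) (m, s)) = if r = s then cst else 0 := by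
    intro r s
    have h1 : (∑ m, σ (m, r) (m, s)) = ((1 / (d : ℝ) : ℝ) : ℂ) * (if r = s then 1 else 0) := by
      have := congrFun (congrFun hred r) s
      simpa [trA, Matrix.smul_apply, Matrix.one_apply] using this
    have h2 : ∀ m : Fin d, (cst • (1 : Matrix (Fin d × Fin d) (Fin d × Fin d) ℂ)) (m, r) (m, s)
        = cst * (if r = s then 1 else 0) := by
      intro m
      simp only [Matrix.smul_apply, Matrix.one_apply, smul_eq_mul]
      congr 1
      by_cases h : r = s
      · simp [h]
      · rw [if_neg (by simp [h]), if_neg h]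
    rw [hτdef]
    simp only [Matrix.sub_apply, Finset.sum_sub_distrib, h1, h2, Finset.sum_const, card_univ,
      Fintype.card_fin, nsmul_eq_mul]
    by_cases h : r = s
    · simp only [if_pos h, mul_one, hcst]
      push_cast
      field_simp
      try ring
    · simp [if_neg h]
  -- apply the decomposition lemma
  refine separable_of_decomp hd σ htr
    (Sum.elim (fun _ : Fin d → ZMod 3 => (d : ℝ) / 3 ^ d) (fun _ : Fin d => 1))
    (by rintro (a | t) <;> simp only [Sum.elim_inl, Sum.elim_inr] <;> positivity)
    (Sum.elim (fun a => (((d:ℝ)⁻¹ : ℝ) : ℂ) • outer (fun k => chi (a k)))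
      (fun t => outer (Pi.single t 1)))
    (Sum.elim (fun a => Phi τ (outer (fun k => star (chi (a k)))))
      (fun t => Phi τ (outer (Pi.single t 1))))
    ?_ (by rintro (a | t) <;> exact Phi_outer_posSemidef hτ _) ?_
  · rintro (a | t)
    · constructor
      · exact smul_posSemidef (outer_posSemidef _) (by positivity)
      · rw [Sum.elim_inl, Matrix.trace_smul, smul_eq_mul]
        have : (outer (fun k => chi (a k))).trace = (d : ℂ) := by
          simp only [Matrix.trace, Matrix.diag, outer, Matrix.vecMulVec_apply, Pi.star_apply]
          rw [Finset.sum_congr rfl (fun k _ => chi_mul_conj' (a k))]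
          simp
        rw [this]
        push_cast
        field_simp
    · constructor
      · exact outer_posSemidef _
      · rw [Sum.elim_inr]
        simp [Matrix.trace, Matrix.diag, outer, Matrix.vecMulVec_apply, Pi.single_apply]
  · -- the big identity
    rw [Fintype.sum_sum_type]
    ext ⟨i, r⟩ ⟨j, s⟩
    simp only [Matrix.add_apply, Matrix.sum_apply, Matrix.smul_apply, Sum.elim_inl, Sum.elim_inr,
      kron, Matrix.kroneckerMap_apply, smul_eq_mul]
    -- second sum
    have hS2 : (∑ t : Fin d, ((1:ℝ):ℂ) * (outer (Pi.single t 1) i j * Phi τ (outer (Pi.single t 1)) r s))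
        = if i = j then τ (i, r) (i, s) else 0 := by
      have hPhi : ∀ t : Fin d, Phi τ (outer (Pi.single t 1)) r s = τ (t, r) (t, s) := by
        intro t
        simp only [Phi, outer, Matrix.vecMulVec_apply, Pi.star_apply, Pi.single_apply]
        simp [ite_mul, mul_ite, apply_ite (star : ℂ → ℂ), Finset.sum_ite_eq', Finset.sum_ite_eq]
      have hout : ∀ t : Fin d, outer (Pi.single t 1) i j
          = (if t = i then 1 else 0) * (if t = j then 1 else 0) := by
        intro t
        simp [outer, Matrix.vecMulVec_apply, Pi.single_apply, apply_ite (star : ℂ → ℂ), eq_comm]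
      simp only [hPhi, hout, Complex.ofReal_one, one_mul]
      by_cases h : i = j
      · subst h
        rw [Finset.sum_eq_single i]
        · simp
        · intro t _ ht; simp [ht]
        · intro h; exact absurd (mem_univ i) h
      · rw [if_neg h]
        apply Finset.sum_eq_zero
        intro t _
        by_cases hti : t = i
        · subst hti; rw [if_neg (fun hh => h hh), mul_zero, zero_mul]
        · rw [if_neg hti]; ring
    -- first sum
    have hout2 : ∀ (a : Fin d → ZMod 3) (m n : Fin d),
        outer (fun k => star (chi (a k))) m n = star (chi (a m)) * chi (a n) := by
      intro a m n
      simp [outer, Matrix.vecMulVec_apply, star_star]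
    have h3d : ((3:ℂ) ^ d) ≠ 0 := by positivity
    have hS1 : (∑ a : Fin d → ZMod 3, (((d : ℝ) / 3 ^ d : ℝ):ℂ) *
          ((((d:ℝ)⁻¹ : ℝ) : ℂ) * outer (fun k => chi (a k)) i j
            * Phi τ (outer (fun k => star (chi (a k)))) r s))
        = ∑ m, ∑ n, (if (i = j ∧ m = n) ∨ (i = m ∧ j = n) then 1 else 0) * τ (m, r) (n, s) := by
      have step : ∀ a : Fin d → ZMod 3, (((d : ℝ) / 3 ^ d : ℝ):ℂ) *
          ((((d:ℝ)⁻¹ : ℝ) : ℂ) * outer (fun k => chi (a k)) i j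
            * Phi τ (outer (fun k => star (chi (a k)))) r s)
          = ∑ p : Fin d × Fin d, ((3:ℂ)^d)⁻¹ *
              (chi (a i) * star (chi (a j)) * star (chi (a p.1)) * chi (a p.2)) * τ (p.1, r) (p.2, s) := by
        intro a
        have houtij : outer (fun k => chi (a k)) i j = chi (a i) * star (chi (a j)) := by
          simp [outer, Matrix.vecMulVec_apply]
        rw [houtij]
        simp only [Phi, hout2, Fintype.sum_prod_type]
        simp only [Finset.mul_sum]
        refine Finset.sum_congr rfl fun m _ => ?_
        refine Finset.sum_congr rfl fun n _ => ?_
        have hcast : (((d : ℝ) / 3 ^ d : ℝ):ℂ) * (((d:ℝ)⁻¹ : ℝ) : ℂ) = ((3:ℂ)^d)⁻¹ := by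
          push_cast
          field_simp
          try ring
        rw [← hcast]
        ring
      simp only [step]
      rw [Finset.sum_comm]
      rw [Fintype.sum_prod_type]
      refine Finset.sum_congr rfl fun m _ => Finset.sum_congr rfl fun n _ => ?_
      rw [← Finset.sum_mul, ← Finset.mul_sum]
      have := key_char_sum i j m n
      rw [show (∑ a : Fin d → ZMod 3, chi (a i) * star (chi (a j)) * star (chi (a m)) * chi (a n))
          = (if (i = j ∧ m = n) ∨ (i = m ∧ j = n) then (3:ℂ)^d else 0) from this]
      congr 1
      by_cases h : (i = j ∧ m = n) ∨ (i = m ∧ j = n)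
      · rw [if_pos h, if_pos h, inv_mul_cancel₀ h3d]
      · rw [if_neg h, if_neg h, mul_zero]
    rw [hS1, hS2]
    -- finish by case analysis
    have hσval : σ (i, r) (j, s) = τ (i, r) (j, s) + cst * ((if i = j then 1 else 0) * (if r = s then 1 else 0)) := by
      rw [hτdef]
      simp only [Matrix.sub_apply, Matrix.smul_apply, Matrix.one_apply, smul_eq_mul]
      have : ((if (i, r) = (j, s) then (1:ℂ) else 0)) = (if i = j then 1 else 0) * (if r = s then 1 else 0) := by
        by_cases h1 : i = j <;> by_cases h2 : r = s <;>
          simp [h1, h2, Prod.ext_iff]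
      rw [this]
      ring
    rw [hσval]
    by_cases hij : i = j
    · subst hij
      have hcond : ∀ m n : Fin d, ((i = i ∧ m = n) ∨ (i = m ∧ i = n)) ↔ m = n := by
        intro m n
        constructor
        · rintro (⟨-, h⟩ | ⟨h1, h2⟩); exact h; rw [← h1, ← h2]
        · intro h; exact Or.inl ⟨rfl, h⟩
      have : (∑ m, ∑ n, (if (i = i ∧ m = n) ∨ (i = m ∧ i = n) then (1:ℂ) else 0) * τ (m, r) (n, s))
          = ∑ m, τ (m, r) (m, s) := by
        refine Finset.sum_congr rfl fun m _ => ?_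
        rw [Finset.sum_eq_single m]
        · rw [if_pos ((hcond m m).mpr rfl), one_mul]
        · intro n _ hn; rw [if_neg (fun hc => hn ((hcond m n).mp hc).symm), zero_mul]
        · intro h; exact absurd (mem_univ m) h
      rw [this, htrA r s, if_pos rfl]
      by_cases hrs : r = s <;> simp [hrs] <;> ring
    · have : (∑ m, ∑ n, (if (i = j ∧ m = n) ∨ (i = m ∧ j = n) then (1:ℂ) else 0) * τ (m, r) (n, s))
          = τ (i, r) (j, s) := by
        rw [Finset.sum_eq_single i]
        · rw [Finset.sum_eq_single j]
          · rw [if_pos (Or.inr ⟨rfl, rfl⟩), one_mul]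
          · intro n _ hn
            rw [if_neg, zero_mul]
            rintro (⟨h1, -⟩ | ⟨-, h2⟩); exact hij h1; exact hn h2.symm
          · intro h; exact absurd (mem_univ j) h
        · intro m _ hm
          apply Finset.sum_eq_zero
          intro n _
          rw [if_neg, zero_mul]
          rintro (⟨h1, -⟩ | ⟨h2, -⟩); exact hij h1; exact hm h2.symm
        · intro h; exact absurd (mem_univ i) h
      rw [this]
      simp only [if_neg hij]
      ring
end
end

section
/- If Λ_0 : M_d(C) → M_d(C) is a completely positive map such that (I ⊗ Λ_0)(|ψ⁺⟩⟨ψ⁺|) is a faithful state, then Λ_0 is an invertible linear map. -/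
open Matrix Finset
open scoped ComplexOrder

noncomputable section

/-- The action of `I_n ⊗ Λ` on an operator on `C^n ⊗ C^d`. -/
def applyRightGen {n d : ℕ} (Λ : Matrix (Fin d) (Fin d) ℂ →ₗ[ℂ] Matrix (Fin d) (Fin d) ℂ)
    (ρ : Matrix (Fin n × Fin d) (Fin n × Fin d) ℂ) :
    Matrix (Fin n × Fin d) (Fin n × Fin d) ℂ :=
  fun p q => ∑ r : Fin d, ∑ s : Fin d,
    ρ (p.1, r) (q.1, s) * Λ (Matrix.single r s 1) p.2 q.2

/-- Complete positivity: `I_n ⊗ Λ` is a positive map for every `n`. -/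
def CompletelyPositive {d : ℕ}
    (Λ : Matrix (Fin d) (Fin d) ℂ →ₗ[ℂ] Matrix (Fin d) (Fin d) ℂ) : Prop :=
  ∀ (n : ℕ) (ρ : Matrix (Fin n × Fin d) (Fin n × Fin d) ℂ),
    ρ.PosSemidef → (applyRightGen Λ ρ).PosSemidef

lemma apply_eq_sum_std {d : ℕ} (Λ : Matrix (Fin d) (Fin d) ℂ →ₗ[ℂ] Matrix (Fin d) (Fin d) ℂ)
    (M : Matrix (Fin d) (Fin d) ℂ) (i j : Fin d) :
    Λ M i j = ∑ r : Fin d, ∑ s : Fin d, M r s * Λ (Matrix.single r s 1) i j := by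
  conv_lhs => rw [Matrix.matrix_eq_sum_single M]
  simp only [map_sum, Matrix.sum_apply]
  refine Finset.sum_congr rfl fun r _ => Finset.sum_congr rfl fun s _ => ?_
  have : Matrix.single r s (M r s) = M r s • Matrix.single r s 1 := by
    rw [Matrix.smul_single, smul_eq_mul, mul_one]
  rw [this, _root_.map_smul, Matrix.smul_apply, smul_eq_mul]

lemma sum4_comm {d : ℕ} (f : Fin d → Fin d → Fin d → Fin d → ℂ) :
    ∑ r : Fin d, ∑ s : Fin d, ∑ a : Fin d, ∑ b : Fin d, f r s a b
      = ∑ a : Fin d, ∑ b : Fin d, ∑ r : Fin d, ∑ s : Fin d, f r s a b := by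
  conv_lhs => enter [2, r]; rw [Finset.sum_comm]
  rw [Finset.sum_comm]
  conv_lhs => enter [2, a, 2, r]; rw [Finset.sum_comm]
  conv_lhs => enter [2, a]; rw [Finset.sum_comm]

lemma applyRight_comp {d : ℕ}
    (Λ Λ₀ : Matrix (Fin d) (Fin d) ℂ →ₗ[ℂ] Matrix (Fin d) (Fin d) ℂ)
    (ρ : Matrix (Fin d × Fin d) (Fin d × Fin d) ℂ) :
    applyRight Λ (applyRight Λ₀ ρ) = applyRight (Λ ∘ₗ Λ₀) ρ := by
  funext p q
  simp only [applyRight, LinearMap.comp_apply]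
  conv_rhs =>
    enter [2, a, 2, b]
    rw [apply_eq_sum_std Λ (Λ₀ (Matrix.single a b 1)) p.2 q.2]
  simp only [Finset.sum_mul, Finset.mul_sum, mul_assoc]
  exact sum4_comm (fun r s a b => ρ (p.1, a) (q.1, b) *
    (Λ₀ (Matrix.single a b 1) r s * Λ (Matrix.single r s 1) p.2 q.2))

/-- if the Choi state of a CP map `Λ₀` is faithful, then `Λ₀` is invertible. -/
theorem cp_map_invertible_of_choi_faithful {d : ℕ}
    (Λ₀ : Matrix (Fin d) (Fin d) ℂ →ₗ[ℂ] Matrix (Fin d) (Fin d) ℂ)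
    (hcp : CompletelyPositive Λ₀)
    (hfaith : Faithful (applyRight Λ₀ (psiProj (d := d)))) :
    Function.Bijective Λ₀ := by
  -- Right-composition with Λ₀ is injective.
  have hinj : Function.Injective
      (fun Λ : Matrix (Fin d) (Fin d) ℂ →ₗ[ℂ] Matrix (Fin d) (Fin d) ℂ => Λ ∘ₗ Λ₀) := by
    intro Λ Λ' h
    have h' : Λ ∘ₗ Λ₀ = Λ' ∘ₗ Λ₀ := h
    apply hfaith
    show applyRight Λ _ = applyRight Λ' _
    rw [applyRight_comp, applyRight_comp, h']
  -- Hence Λ₀ is surjective.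
  have hsurj : Function.Surjective Λ₀ := by
    rw [← LinearMap.range_eq_top]
    by_contra hne
    obtain ⟨q, hq⟩ := Submodule.exists_isCompl (LinearMap.range Λ₀)
    have hqne : q ≠ ⊥ := by
      intro hbot
      exact hne (by simpa [hbot, codisjoint_iff] using hq.codisjoint)
    obtain ⟨x, hx, hx0⟩ := Submodule.exists_mem_ne_zero_of_ne_bot hqne
    set Λ : Matrix (Fin d) (Fin d) ℂ →ₗ[ℂ] Matrix (Fin d) (Fin d) ℂ :=
      q.subtype ∘ₗ (q.projectionOnto (LinearMap.range Λ₀) hq.symm)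
    have hcomp : Λ ∘ₗ Λ₀ = 0 := by
      ext M
      simp [Λ, Submodule.projectionOnto_apply_right hq.symm
        ⟨Λ₀ M, LinearMap.mem_range_self Λ₀ M⟩]
    have : Λ = 0 := hinj (by simpa using hcomp)
    have : Λ x = 0 := by rw [this]; rfl
    rw [show Λ x = x by
      simp [Λ, Submodule.projectionOnto_apply_left hq.symm ⟨x, hx⟩]] at this
    exact hx0 this
  exact ⟨(LinearMap.injective_iff_surjective).mpr hsurj, hsurj⟩
end
end
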